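/- arXiv:1103.1072 — 11 statements merged into one kernel-verified Lean document; each statement's English description precedes it below -/
import Mathlib

section
/- A 4×4 real antisymmetric matrix A is a wedge product, i.e., A = u vᵀ - v uᵀ for some u, v ∈ ℝ⁴, if and only if det A = 0. -/
open Matrix

lemma my_det_fin_four (A : Matrix (Fin 4) (Fin 4) ℝ) :
    A.det =
      A 0 0 * A 1 1 * A 2 2 * A 3 3 - A 0 0 * A 1 1 * A 2 3 * A 3 2 -
        A 0 0 * A 1 2 * A 2 1 * A 3 3 + A 0 0 * A 1 2 * A 2 3 * A 3 1 +
        A 0 0 * A 1 3 * A 2 1 * A 3 2 - A 0 0 * A 1 3 * A 2 2 * A 3 1 -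
        A 0 1 * A 1 0 * A 2 2 * A 3 3 + A 0 1 * A 1 0 * A 2 3 * A 3 2 +
        A 0 1 * A 1 2 * A 2 0 * A 3 3 - A 0 1 * A 1 2 * A 2 3 * A 3 0 -
        A 0 1 * A 1 3 * A 2 0 * A 3 2 + A 0 1 * A 1 3 * A 2 2 * A 3 0 +
        A 0 2 * A 1 0 * A 2 1 * A 3 3 - A 0 2 * A 1 0 * A 2 3 * A 3 1 -
        A 0 2 * A 1 1 * A 2 0 * A 3 3 + A 0 2 * A 1 1 * A 2 3 * A 3 0 +
        A 0 2 * A 1 3 * A 2 0 * A 3 1 - A 0 2 * A 1 3 * A 2 1 * A 3 0 -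
        A 0 3 * A 1 0 * A 2 1 * A 3 2 + A 0 3 * A 1 0 * A 2 2 * A 3 1 +
        A 0 3 * A 1 1 * A 2 0 * A 3 2 - A 0 3 * A 1 1 * A 2 2 * A 3 0 -
        A 0 3 * A 1 2 * A 2 0 * A 3 1 + A 0 3 * A 1 2 * A 2 1 * A 3 0 := by
  rw [Matrix.det_succ_row_zero]
  simp [Fin.sum_univ_succ, Matrix.det_fin_three, Matrix.submatrix,
    Fin.succAbove, show Fin.succ (2:Fin 3) = 3 from rfl,
    show Fin.castSucc (2:Fin 3) = 2 from rfl,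
    show ((1:Fin 4) < 3) = True from by decide]
  ring

lemma wedge_det_zero (u v : Fin 4 → ℝ) :
    (vecMulVec u v - vecMulVec v u).det = 0 := by
  rw [my_det_fin_four]
  simp only [Matrix.sub_apply, vecMulVec_apply]
  ring

lemma skew_form (A : Matrix (Fin 4) (Fin 4) ℝ) (h : ∀ i j, A j i = -A i j) :
    A = !![0, A 0 1, A 0 2, A 0 3;
           -(A 0 1), 0, A 1 2, A 1 3;
           -(A 0 2), -(A 1 2), 0, A 2 3;
           -(A 0 3), -(A 1 3), -(A 2 3), 0] := by
  have hdiag : ∀ i, A i i = 0 := fun i => by have := h i i; linarith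
  ext i j
  fin_cases i <;> fin_cases j <;>
    (try simp) <;>
    first
      | rfl
      | exact hdiag _
      | exact h _ _

set_option maxHeartbeats 1000000 in
lemma build_wedge (a b c d e f : ℝ) (hp : a * f - b * e + c * d = 0) :
    ∃ u v : Fin 4 → ℝ,
      (!![0, a, b, c; -a, 0, d, e; -b, -d, 0, f; -c, -e, -f, 0] :
        Matrix (Fin 4) (Fin 4) ℝ) = vecMulVec u v - vecMulVec v u := by
  by_cases hba : a ≠ 0
  · refine ⟨![0, a, b, c], ![-1, 0, d / a, e / a], ?_⟩
    ext i j
    fin_cases i <;> fin_cases j <;>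
      simp [vecMulVec_apply, Matrix.sub_apply] <;>
      (try field_simp) <;>
      first
        | ring1
        | linear_combination hp
        | linear_combination -hp
        | linear_combination 2 * hp
        | linear_combination -2 * hp
        | linear_combination a * hp
        | linear_combination -a * hp
        | linear_combination b * hp
        | linear_combination -b * hp
        | linear_combination c * hp
        | linear_combination -c * hp
  by_cases hbb : b ≠ 0
  · refine ⟨![0, a, b, c], ![-1, -d / b, 0, f / b], ?_⟩
    ext i j
    fin_cases i <;> fin_cases j <;>
      simp [vecMulVec_apply, Matrix.sub_apply] <;>
      (try field_simp) <;>
      first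
        | ring1
        | linear_combination hp
        | linear_combination -hp
        | linear_combination 2 * hp
        | linear_combination -2 * hp
        | linear_combination a * hp
        | linear_combination -a * hp
        | linear_combination b * hp
        | linear_combination -b * hp
        | linear_combination c * hp
        | linear_combination -c * hp
  by_cases hbc : c ≠ 0
  · refine ⟨![0, a, b, c], ![-1, -e / c, -f / c, 0], ?_⟩
    ext i j
    fin_cases i <;> fin_cases j <;>
      simp [vecMulVec_apply, Matrix.sub_apply] <;>
      (try field_simp) <;>
      first
        | ring1
        | linear_combination hp
        | linear_combination -hp
        | linear_combination 2 * hp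
        | linear_combination -2 * hp
        | linear_combination a * hp
        | linear_combination -a * hp
        | linear_combination b * hp
        | linear_combination -b * hp
        | linear_combination c * hp
        | linear_combination -c * hp
  push_neg at hba hbb hbc
  subst hba hbb hbc
  by_cases hbd : d ≠ 0
  · refine ⟨![0, 0, d, e], ![0, -1, 0, f / d], ?_⟩
    ext i j
    fin_cases i <;> fin_cases j <;>
      simp [vecMulVec_apply, Matrix.sub_apply] <;>
      (try field_simp) <;>
      first
        | ring1
        | linear_combination hp
        | linear_combination -hp
        | simp [Matrix.vecHead, Matrix.vecTail]
        | linarith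
  by_cases hbe : e ≠ 0
  · push_neg at hbd
    subst hbd
    refine ⟨![0, 0, 0, e], ![0, -1, -f / e, 0], ?_⟩
    ext i j
    fin_cases i <;> fin_cases j <;>
      simp [vecMulVec_apply, Matrix.sub_apply] <;>
      (try field_simp) <;>
      first
        | ring1
        | linear_combination hp
        | linear_combination -hp
        | simp [Matrix.vecHead, Matrix.vecTail]
        | linarith
  push_neg at hbe
  simp only [not_not] at hbd
  subst hbd hbe
  refine ⟨![0, 0, 0, f], ![0, 0, -1, 0], ?_⟩
  ext i j
  fin_cases i <;> fin_cases j <;>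
    simp [vecMulVec_apply, Matrix.sub_apply, Matrix.vecHead, Matrix.vecTail]

theorem wedge_iff_det_eq_zero (A : Matrix (Fin 4) (Fin 4) ℝ) (hA : Aᵀ = -A) :
    (∃ u v : Fin 4 → ℝ, A = vecMulVec u v - vecMulVec v u) ↔ A.det = 0 := by
  have h : ∀ i j, A j i = -A i j := fun i j => congrFun (congrFun hA i) j
  constructor
  · rintro ⟨u, v, rfl⟩
    exact wedge_det_zero u v
  · intro hdet
    have hdiag : ∀ i, A i i = 0 := fun i => by have := h i i; linarith
    have hsq : (A 0 1 * A 2 3 - A 0 2 * A 1 3 + A 0 3 * A 1 2) ^ 2 = 0 := by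
      rw [← hdet, my_det_fin_four, h 0 1, h 0 2, h 0 3, h 1 2, h 1 3, h 2 3,
        hdiag 0, hdiag 1, hdiag 2, hdiag 3]
      ring
    have hp : A 0 1 * A 2 3 - A 0 2 * A 1 3 + A 0 3 * A 1 2 = 0 :=
      pow_eq_zero_iff (by norm_num) |>.mp hsq
    rw [skew_form A h]
    exact build_wedge (A 0 1) (A 0 2) (A 0 3) (A 1 2) (A 1 3) (A 2 3) hp
end

section
/- For any L in so(g), where g is a 4×4 real symmetric matrix with det g < 0, one has det L ≤ 0. -/
open Matrix

theorem det_nonpos_of_mem_so (g L : Matrix (Fin 4) (Fin 4) ℝ)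
    (hsymm : gᵀ = g) (hg : g.det < 0) (hL : Lᵀ * g + g * L = 0) :
    L.det ≤ 0 := by
  set A := g * L with hAdef
  have hA : Aᵀ = -A := by
    have h1 : Lᵀ * g = -(g * L) := by
      have := hL
      linear_combination (norm := abel) this
    calc Aᵀ = Lᵀ * gᵀ := by rw [hAdef, transpose_mul]
    _ = Lᵀ * g := by rw [hsymm]
    _ = -A := by rw [h1, hAdef]
  have hskew : ∀ i j, A i j = - A j i := by
    intro i j
    have := congrFun (congrFun hA j) i
    simpa [Matrix.transpose_apply, Matrix.neg_apply] using this
  have h00 : A 0 0 = 0 := by have := hskew 0 0; linarith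
  have h11 : A 1 1 = 0 := by have := hskew 1 1; linarith
  have h22 : A 2 2 = 0 := by have := hskew 2 2; linarith
  have h33 : A 3 3 = 0 := by have := hskew 3 3; linarith
  have h10 : A 1 0 = -A 0 1 := by have := hskew 1 0; linarith
  have h20 : A 2 0 = -A 0 2 := by have := hskew 2 0; linarith
  have h30 : A 3 0 = -A 0 3 := by have := hskew 3 0; linarith
  have h21 : A 2 1 = -A 1 2 := by have := hskew 2 1; linarith
  have h31 : A 3 1 = -A 1 3 := by have := hskew 3 1; linarith
  have h32 : A 3 2 = -A 2 3 := by have := hskew 3 2; linarith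
  have hdetA : 0 ≤ A.det := by
    simp only [Matrix.det_succ_row_zero, Fin.sum_univ_succ, Fin.sum_univ_zero,
      Matrix.submatrix_apply, Matrix.det_fin_zero, Fin.succAbove]
    norm_num [Fin.lt_def, show (Fin.succ 2 : Fin 4) = 3 from rfl,
      show (Fin.castSucc 2 : Fin 4) = 2 from rfl,
      show (((3:Fin 4)):ℕ) = 3 from rfl, show (((3:Fin 5)):ℕ) = 3 from rfl, h00, h11, h22, h33, h10, h20, h30, h21, h31, h32]
    nlinarith [sq_nonneg (A 0 1 * A 2 3 - A 0 2 * A 1 3 + A 0 3 * A 1 2)]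
  have hmul : A.det = g.det * L.det := by rw [hAdef, Matrix.det_mul]
  nlinarith [hdetA, hmul, hg]
end

section
/- For any L in so(g), where g is a 4×4 real Lorentz metric (symmetric, det g < 0), L satisfies L⁴ + (tr₂ L)·L² + (det L)·I = 0, where tr₂ L = −½ tr(L²). -/
open Matrix Polynomial

lemma eval_cp {n : Type*} [DecidableEq n] [Fintype n] (M : Matrix n n ℝ) (x : ℝ) :
    M.charpoly.eval x = (x • (1 : Matrix n n ℝ) - M).det := by
  rw [Matrix.charpoly, ← Polynomial.coe_evalRingHom, RingHom.map_det]
  congr 1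
  ext i j
  by_cases h : i = j
  · subst h
    simp [charmatrix_apply_eq, Matrix.one_apply]
  · simp [charmatrix_apply_ne _ _ _ h, Matrix.one_apply_ne h]

set_option maxHeartbeats 1600000 in
lemma det4 (M : Matrix (Fin 4) (Fin 4) ℝ) : M.det =
    M 0 0 * (M 1 1 * (M 2 2 * M 3 3 - M 2 3 * M 3 2) - M 1 2 * (M 2 1 * M 3 3 - M 2 3 * M 3 1)
      + M 1 3 * (M 2 1 * M 3 2 - M 2 2 * M 3 1))
  - M 0 1 * (M 1 0 * (M 2 2 * M 3 3 - M 2 3 * M 3 2) - M 1 2 * (M 2 0 * M 3 3 - M 2 3 * M 3 0)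
      + M 1 3 * (M 2 0 * M 3 2 - M 2 2 * M 3 0))
  + M 0 2 * (M 1 0 * (M 2 1 * M 3 3 - M 2 3 * M 3 1) - M 1 1 * (M 2 0 * M 3 3 - M 2 3 * M 3 0)
      + M 1 3 * (M 2 0 * M 3 1 - M 2 1 * M 3 0))
  - M 0 3 * (M 1 0 * (M 2 1 * M 3 2 - M 2 2 * M 3 1) - M 1 1 * (M 2 0 * M 3 2 - M 2 2 * M 3 0)
      + M 1 2 * (M 2 0 * M 3 1 - M 2 1 * M 3 0)) := by
  simp [Matrix.det_succ_row_zero, Fin.sum_univ_succ, Fin.succAbove,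
    show Fin.succ 2 = (3:Fin 4) from rfl, show Fin.castSucc 2 = (2:Fin 4) from rfl]
  ring

set_option maxHeartbeats 3200000 in
lemma trace_id (M : Matrix (Fin 4) (Fin 4) ℝ) :
    ((1:ℝ) • (1 : Matrix (Fin 4) (Fin 4) ℝ) - M).det
      + ((-1:ℝ) • (1 : Matrix (Fin 4) (Fin 4) ℝ) - M).det
      - 2 * ((0:ℝ) • (1 : Matrix (Fin 4) (Fin 4) ℝ) - M).det - 2
    = (Matrix.trace M)^2 - Matrix.trace (M * M) := by
  simp only [det4, Matrix.trace, Matrix.diag, Matrix.mul_apply, Fin.sum_univ_four,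
    Matrix.sub_apply, Matrix.smul_apply, Matrix.one_apply]
  norm_num (config := { decide := true }) [Fin.ext_iff]
  ring

lemma det_zero_smul (M : Matrix (Fin 4) (Fin 4) ℝ) :
    ((0:ℝ) • (1 : Matrix (Fin 4) (Fin 4) ℝ) - M).det = M.det := by
  simp [Matrix.det_neg]
  norm_num

set_option maxHeartbeats 1600000 in
theorem quartic_relation (g L : Matrix (Fin 4) (Fin 4) ℝ)
    (hsymm : gᵀ = g) (hg : g.det < 0) (hL : Lᵀ * g + g * L = 0) :
    L ^ 4 + (-(Matrix.trace (L * L)) / 2) • L ^ 2 + L.det • (1 : Matrix (Fin 4) (Fin 4) ℝ) = 0 := by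
  have hgdet : g.det ≠ 0 := ne_of_lt hg
  have hLT : Lᵀ * g = -(g * L) := by
    have := hL
    linear_combination (norm := noncomm_ring) this
  -- symmetry of the "resolvent determinant"
  have dsym : ∀ x : ℝ, (x • (1 : Matrix (Fin 4) (Fin 4) ℝ) - L).det
      = ((-x) • (1 : Matrix (Fin 4) (Fin 4) ℝ) - L).det := by
    intro x
    have key : g * (x • (1 : Matrix (Fin 4) (Fin 4) ℝ) - L)
        = (x • (1 : Matrix (Fin 4) (Fin 4) ℝ) + L)ᵀ * g := by
      rw [Matrix.transpose_add, Matrix.transpose_smul, Matrix.transpose_one,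
        Matrix.mul_sub, Matrix.add_mul, Matrix.mul_smul, Matrix.smul_mul,
        Matrix.mul_one, Matrix.one_mul, hLT, sub_eq_add_neg]
    have hdets : g.det * (x • (1 : Matrix (Fin 4) (Fin 4) ℝ) - L).det
        = (x • (1 : Matrix (Fin 4) (Fin 4) ℝ) + L).det * g.det := by
      calc g.det * (x • (1 : Matrix (Fin 4) (Fin 4) ℝ) - L).det
          = (g * (x • (1 : Matrix (Fin 4) (Fin 4) ℝ) - L)).det := (Matrix.det_mul _ _).symm
        _ = ((x • (1 : Matrix (Fin 4) (Fin 4) ℝ) + L)ᵀ * g).det := by rw [key]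
        _ = (x • (1 : Matrix (Fin 4) (Fin 4) ℝ) + L).det * g.det := by
            rw [Matrix.det_mul, Matrix.det_transpose]
    have h1 : (x • (1 : Matrix (Fin 4) (Fin 4) ℝ) - L).det
        = (x • (1 : Matrix (Fin 4) (Fin 4) ℝ) + L).det := by
      exact mul_left_cancel₀ hgdet (hdets.trans (mul_comm _ _))
    have h2 : (-x) • (1 : Matrix (Fin 4) (Fin 4) ℝ) - L
        = -(x • (1 : Matrix (Fin 4) (Fin 4) ℝ) + L) := by
      rw [neg_smul]; abel
    rw [h1, h2, Matrix.det_neg]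
    norm_num
  set p := L.charpoly with hp
  have hdeg : p.natDegree = 4 := by
    rw [hp, Matrix.charpoly_natDegree_eq_dim]
    simp
  have hmonic : p.coeff 4 = 1 := by
    have := L.charpoly_monic
    rw [Polynomial.Monic, Polynomial.leadingCoeff, hdeg] at this
    exact this
  set c0 := p.coeff 0
  set c1 := p.coeff 1
  set c2 := p.coeff 2
  set c3 := p.coeff 3
  have heval : ∀ x : ℝ, p.eval x = c0 + c1 * x + c2 * x^2 + c3 * x^3 + x^4 := by
    intro x
    rw [Polynomial.eval_eq_sum_range, hdeg]
    simp [Finset.sum_range_succ, hmonic]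
    rfl
  have hd : ∀ x : ℝ, c0 + c1 * x + c2 * x^2 + c3 * x^3 + x^4
      = (x • (1 : Matrix (Fin 4) (Fin 4) ℝ) - L).det := by
    intro x
    rw [← heval, eval_cp]
  have e0 := hd 0
  have e1 := hd 1
  have em1 := hd (-1)
  have e2 := hd 2
  have em2 := hd (-2)
  have s1 := dsym 1
  have s2 := dsym 2
  rw [← e1, show ((-1:ℝ)) = -1 from rfl, ← em1] at s1
  rw [← e2, ← em2] at s2
  have hc1 : c1 = 0 := by nlinarith [s1, s2]
  have hc3 : c3 = 0 := by nlinarith [s1, s2]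
  have htr : Matrix.trace L = 0 := by
    have h := Matrix.trace_eq_neg_charpoly_coeff L
    have h3 : L.charpoly.coeff 3 = 0 := hc3
    simp only [Fintype.card_fin] at h
    rw [h, show (4 - 1 : ℕ) = 3 from rfl, h3, neg_zero]
  have hc0 : c0 = L.det := by
    rw [← det_zero_smul L, ← hd 0]
    ring
  have hc2 : c2 = -(Matrix.trace (L * L)) / 2 := by
    have tid := trace_id L
    rw [← e1, ← em1, ← e0, htr] at tid
    nlinarith [tid]
  -- Cayley–Hamilton
  have hCH : Polynomial.aeval L p = 0 := Matrix.aeval_self_charpoly L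
  rw [Polynomial.aeval_eq_sum_range, hdeg] at hCH
  simp only [Finset.sum_range_succ, Finset.sum_range_zero, zero_add, pow_zero, pow_one,
    hmonic, one_smul] at hCH
  have hCH' : c0 • (1 : Matrix (Fin 4) (Fin 4) ℝ) + c1 • L + c2 • L ^ 2 + c3 • L ^ 3 + L ^ 4
      = 0 := hCH
  rw [hc1, hc3, hc0, hc2, zero_smul, zero_smul] at hCH'
  calc L ^ 4 + (-(Matrix.trace (L * L)) / 2) • L ^ 2 + L.det • (1 : Matrix (Fin 4) (Fin 4) ℝ)
      = L.det • (1 : Matrix (Fin 4) (Fin 4) ℝ) + 0 + (-(Matrix.trace (L * L)) / 2) • L ^ 2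
        + 0 + L ^ 4 := by abel
    _ = 0 := hCH'
end

section
/- Let g be a 4×4 real symmetric matrix with det g < 0, and let L ∈ so(g). Then L is simple (i.e., L = (u vᵀ − v uᵀ) g for some u, v ∈ ℝ⁴) if and only if det L = 0. -/
open Matrix

set_option maxHeartbeats 1600000 in
lemma antisym_decomp_aux (a b c d e f : ℝ) (hpl : a*f - b*e + c*d = 0) :
    ∃ u v : Fin 4 → ℝ,
      (!![0,a,b,c; -a,0,d,e; -b,-d,0,f; -c,-e,-f,0] : Matrix (Fin 4) (Fin 4) ℝ)
        = vecMulVec u v - vecMulVec v u := by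
  by_cases ha : a ≠ 0
  · refine ⟨![1, 0, -d/a, -e/a], ![0, a, b, c], ?_⟩
    ext i j
    fin_cases i <;> fin_cases j <;> simp [vecMulVec_apply, vecHead, vecTail]
    all_goals try field_simp
    all_goals
      first
        | linarith
        | linear_combination a * hpl
        | linear_combination -a * hpl
  push_neg at ha; subst ha
  by_cases hb : b ≠ 0
  · refine ⟨![1, d/b, 0, -f/b], ![0, 0, b, c], ?_⟩
    ext i j
    fin_cases i <;> fin_cases j <;> simp [vecMulVec_apply, vecHead, vecTail]
    all_goals try field_simp
    all_goals
      first
        | linarith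
        | linear_combination b * hpl
        | linear_combination -b * hpl
        | linear_combination hpl
        | linear_combination -hpl
  push_neg at hb; subst hb
  by_cases hc : c ≠ 0
  · have hd0 : d = 0 := by
      have h : c * d = 0 := by linarith
      rcases mul_eq_zero.mp h with h | h
      · exact absurd h hc
      · exact h
    subst hd0
    refine ⟨![1, e/c, f/c, 0], ![0, 0, 0, c], ?_⟩
    ext i j
    fin_cases i <;> fin_cases j <;> simp [vecMulVec_apply, vecHead, vecTail]
    all_goals try field_simp
    all_goals try linarith
  push_neg at hc; subst hc
  by_cases hd : d ≠ 0
  · refine ⟨![0, 1, 0, -f/d], ![0, 0, d, e], ?_⟩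
    ext i j
    fin_cases i <;> fin_cases j <;> simp [vecMulVec_apply, vecHead, vecTail]
    all_goals try field_simp
    all_goals try linarith
  push_neg at hd; subst hd
  by_cases he : e ≠ 0
  · refine ⟨![0, 1, f/e, 0], ![0, 0, 0, e], ?_⟩
    ext i j
    fin_cases i <;> fin_cases j <;> simp [vecMulVec_apply, vecHead, vecTail]
    all_goals try field_simp
    all_goals try linarith
  push_neg at he; subst he
  refine ⟨![0, 0, 1, 0], ![0, 0, 0, f], ?_⟩
  ext i j
  fin_cases i <;> fin_cases j <;> simp [vecMulVec_apply, vecHead, vecTail]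

set_option maxHeartbeats 1600000 in
lemma forward_det_aux (u v : Fin 4 → ℝ) :
    (vecMulVec u v - vecMulVec v u : Matrix (Fin 4) (Fin 4) ℝ).det = 0 := by
  simp [Matrix.det_succ_row_zero, Fin.sum_univ_succ, vecMulVec_apply]
  ring

set_option maxHeartbeats 1600000 in
lemma det_antisym_aux (a b c d e f : ℝ) :
    (!![0,a,b,c; -a,0,d,e; -b,-d,0,f; -c,-e,-f,0] : Matrix (Fin 4) (Fin 4) ℝ).det
      = (a*f - b*e + c*d)^2 := by
  simp [Matrix.det_succ_row_zero, Fin.sum_univ_succ, Fin.succAbove]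
  ring

set_option maxHeartbeats 1600000 in
theorem simple_iff_det_eq_zero (g L : Matrix (Fin 4) (Fin 4) ℝ)
    (hsymm : gᵀ = g) (hg : g.det < 0) (hL : Lᵀ * g + g * L = 0) :
    (∃ u v : Fin 4 → ℝ, L = (vecMulVec u v - vecMulVec v u) * g) ↔ L.det = 0 := by
  have hgne : g.det ≠ 0 := ne_of_lt hg
  have hgu : IsUnit g.det := isUnit_iff_ne_zero.mpr hgne
  constructor
  · rintro ⟨u, v, rfl⟩
    rw [det_mul, forward_det_aux, zero_mul]
  · intro hdet
    set A := L * g⁻¹ with hA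
    have hLA : L = A * g := (Matrix.nonsing_inv_mul_cancel_right g L hgu).symm
    have hAT : Aᵀ = -A := by
      have h1 : Lᵀ * g = -(g * L) := by
        linear_combination (norm := noncomm_ring) hL
      have heq : Aᵀ = g⁻¹ * Lᵀ := by
        rw [hA, transpose_mul, Matrix.transpose_nonsing_inv, hsymm]
      rw [heq]
      calc g⁻¹ * Lᵀ = g⁻¹ * (Lᵀ * g) * g⁻¹ := by
            rw [Matrix.mul_assoc, Matrix.mul_nonsing_inv_cancel_right _ _ hgu]
        _ = g⁻¹ * (-(g * L)) * g⁻¹ := by rw [h1]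
        _ = -(g⁻¹ * g * L * g⁻¹) := by simp [Matrix.mul_assoc]
        _ = -(L * g⁻¹) := by rw [Matrix.nonsing_inv_mul _ hgu, Matrix.one_mul]
        _ = -A := rfl
    have hentry : ∀ i j, A j i = -A i j := by
      intro i j
      have := congrFun (congrFun hAT j) i
      simp [transpose_apply] at this
      linarith
    have hAexp : A = !![0, A 0 1, A 0 2, A 0 3;
        -(A 0 1), 0, A 1 2, A 1 3;
        -(A 0 2), -(A 1 2), 0, A 2 3;
        -(A 0 3), -(A 1 3), -(A 2 3), 0] := by
      have hd : ∀ i, A i i = 0 := fun i => by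
        have := hentry i i; linarith
      ext i j
      fin_cases i <;> fin_cases j <;>
        simp [hd, hentry 0 1, hentry 0 2, hentry 0 3, hentry 1 2, hentry 1 3, hentry 2 3]
    have hdetA : A.det = (A 0 1 * A 2 3 - A 0 2 * A 1 3 + A 0 3 * A 1 2)^2 := by
      rw [hAexp]
      exact det_antisym_aux _ _ _ _ _ _
    have hpl : A 0 1 * A 2 3 - A 0 2 * A 1 3 + A 0 3 * A 1 2 = 0 := by
      have hLdet : L.det = A.det * g.det := by rw [hLA, det_mul]
      rw [hdet, hdetA] at hLdet
      have hsq : (A 0 1 * A 2 3 - A 0 2 * A 1 3 + A 0 3 * A 1 2)^2 = 0 := by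
        rcases mul_eq_zero.mp hLdet.symm with h | h
        · exact h
        · exact absurd h hgne
      exact pow_eq_zero_iff (by norm_num) |>.mp hsq
    obtain ⟨u, v, huv⟩ := antisym_decomp_aux _ _ _ _ _ _ hpl
    exact ⟨u, v, by rw [hLA, hAexp, huv]⟩
end

section
/- Let g be a 4×4 real symmetric invertible matrix, u, v ∈ ℝ⁴, L = u vᵀ g − v uᵀ g, and suppose tr₂ L ≠ 0. Then P := −L²/(tr₂ L) satisfies P² = P, tr P = 2, (gP)ᵀ = gP, and the image of P equals the span of u and v. -/
open Matrix

set_option linter.unusedSectionVars false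
set_option maxHeartbeats 1000000

section helpers
variable {n : Type*} [Fintype n]

lemma vmv_mul (a b : n → ℝ) (M : Matrix n n ℝ) :
    vecMulVec a b * M = vecMulVec a (b ᵥ* M) := by
  ext i j
  simp [mul_apply, vecMulVec_apply, vecMul, dotProduct, Finset.mul_sum, mul_assoc]

lemma vmv_mul_vmv (a b c d : n → ℝ) :
    vecMulVec a b * vecMulVec c d = (b ⬝ᵥ c) • vecMulVec a d := by
  ext i j
  simp [mul_apply, vecMulVec_apply, dotProduct, Finset.sum_mul, Finset.mul_sum]
  congr 1; ext k; ring

lemma mul_vmv (M : Matrix n n ℝ) (a b : n → ℝ) :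
    M * vecMulVec a b = vecMulVec (M *ᵥ a) b := by
  ext i j
  simp [mul_apply, vecMulVec_apply, mulVec, dotProduct, Finset.sum_mul, mul_assoc]

lemma vmv_mulVec (a b x : n → ℝ) : vecMulVec a b *ᵥ x = (b ⬝ᵥ x) • a := by
  ext i
  simp [mulVec, vecMulVec_apply, dotProduct, Finset.mul_sum]
  rw [Finset.sum_mul]
  exact Finset.sum_congr rfl fun k _ => by ring

lemma trace_vmv (a b : n → ℝ) : Matrix.trace (vecMulVec a b) = a ⬝ᵥ b := by
  simp [Matrix.trace, vecMulVec_apply, dotProduct, Matrix.diag]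

lemma transpose_vmv (a b : n → ℝ) : (vecMulVec a b)ᵀ = vecMulVec b a := by
  ext i j; simp [vecMulVec_apply, mul_comm]

end helpers

/-- Second order trace of a 4×4 matrix. -/
noncomputable def tr2 (M : Matrix (Fin 4) (Fin 4) ℝ) : ℝ :=
  (Matrix.trace M ^ 2 - Matrix.trace (M * M)) / 2

theorem proj_of_simple (g : Matrix (Fin 4) (Fin 4) ℝ)
    (hsymm : gᵀ = g) (hinv : IsUnit g.det) (u v : Fin 4 → ℝ)
    (L : Matrix (Fin 4) (Fin 4) ℝ)
    (hLdef : L = (vecMulVec u v - vecMulVec v u) * g)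
    (htr2 : tr2 L ≠ 0)
    (P : Matrix (Fin 4) (Fin 4) ℝ) (hPdef : P = (-(tr2 L)⁻¹) • (L * L)) :
    P * P = P ∧ Matrix.trace P = 2 ∧ (g * P)ᵀ = g * P ∧
    LinearMap.range P.mulVecLin = Submodule.span ℝ ({u, v} : Set (Fin 4 → ℝ)) := by
  set u' : Fin 4 → ℝ := u ᵥ* g with hu'
  set v' : Fin 4 → ℝ := v ᵥ* g with hv'
  set p : ℝ := v' ⬝ᵥ v with hp
  set q : ℝ := u' ⬝ᵥ u with hq
  set r : ℝ := v' ⬝ᵥ u with hr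
  have hgu : g *ᵥ u = u' := by rw [hu', ← mulVec_transpose, hsymm]
  have hgv : g *ᵥ v = v' := by rw [hv', ← mulVec_transpose, hsymm]
  have hr' : u' ⬝ᵥ v = r := by
    rw [hu', ← dotProduct_mulVec, hgv, dotProduct_comm]
  have hLv : L = vecMulVec u v' - vecMulVec v u' := by
    rw [hLdef, sub_mul, vmv_mul, vmv_mul]
  have hL2 : L * L = r • vecMulVec u v' + r • vecMulVec v u'
      - p • vecMulVec u u' - q • vecMulVec v v' := by
    rw [hLv, sub_mul, mul_sub, mul_sub, vmv_mul_vmv, vmv_mul_vmv, vmv_mul_vmv,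
      vmv_mul_vmv, hr', ← hp, ← hq, ← hr]
    module
  have htrL : Matrix.trace L = 0 := by
    rw [hLv, trace_sub, trace_vmv, trace_vmv, dotProduct_comm u v', dotProduct_comm v u',
      hr', ← hr, sub_self]
  have htrL2 : Matrix.trace (L * L) = 2 * (r * r) - 2 * (p * q) := by
    rw [hL2]
    simp only [trace_sub, trace_add, trace_smul, trace_vmv, smul_eq_mul]
    rw [dotProduct_comm u v', dotProduct_comm v u', dotProduct_comm u u',
      dotProduct_comm v v', hr', ← hp, ← hq, ← hr]
    ring
  have htr2v : tr2 L = p * q - r * r := by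
    rw [tr2, htrL, htrL2]; ring
  have hc : p * q - r * r ≠ 0 := htr2v ▸ htr2
  have hL4 : L * L * (L * L) = (r * r - p * q) • (L * L) := by
    rw [hL2]
    simp only [sub_mul, add_mul, mul_sub, mul_add, Matrix.smul_mul, Matrix.mul_smul,
      vmv_mul_vmv, hr', ← hp, ← hq, ← hr, smul_smul]
    module
  have hPP : P * P = P := by
    rw [hPdef, Matrix.smul_mul, Matrix.mul_smul, smul_smul, hL4, smul_smul]
    congr 1
    rw [htr2v]
    have hc2 : p * q - r ^ 2 ≠ 0 := by rwa [sq]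
    field_simp
    ring
  have hL2u : (L * L) *ᵥ u = (r * r - p * q) • u := by
    rw [hL2, sub_mulVec, sub_mulVec, add_mulVec, smul_mulVec, smul_mulVec,
      smul_mulVec, smul_mulVec, vmv_mulVec, vmv_mulVec, vmv_mulVec, vmv_mulVec,
      ← hq, ← hr]
    module
  have hL2v : (L * L) *ᵥ v = (r * r - p * q) • v := by
    rw [hL2, sub_mulVec, sub_mulVec, add_mulVec, smul_mulVec, smul_mulVec,
      smul_mulVec, smul_mulVec, vmv_mulVec, vmv_mulVec, vmv_mulVec, vmv_mulVec,
      hr', ← hp]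
    module
  have hscal : (-(tr2 L)⁻¹) * (r * r - p * q) = 1 := by
    have hc2 : p * q - r ^ 2 ≠ 0 := by rwa [sq]
    rw [htr2v]; field_simp; ring
  have hPu : P *ᵥ u = u := by
    rw [hPdef, smul_mulVec, hL2u, smul_smul, hscal, one_smul]
  have hPv : P *ᵥ v = v := by
    rw [hPdef, smul_mulVec, hL2v, smul_smul, hscal, one_smul]
  refine ⟨hPP, ?_, ?_, ?_⟩
  · rw [hPdef, trace_smul, htrL2, smul_eq_mul, htr2v]
    have hc2 : p * q - r ^ 2 ≠ 0 := by rwa [sq]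
    field_simp
    ring
  · rw [hPdef, Matrix.mul_smul, transpose_smul, hL2]
    simp only [mul_sub, mul_add, Matrix.mul_smul, mul_vmv, hgu, hgv,
      transpose_sub, transpose_add, transpose_smul, transpose_vmv]
    congr 1
    abel
  · apply le_antisymm
    · rintro x ⟨y, rfl⟩
      rw [mulVecLin_apply, hPdef, smul_mulVec, hL2, sub_mulVec, sub_mulVec,
        add_mulVec, smul_mulVec, smul_mulVec, smul_mulVec,
        smul_mulVec, vmv_mulVec, vmv_mulVec, vmv_mulVec, vmv_mulVec]
      have hu : u ∈ Submodule.span ℝ ({u, v} : Set (Fin 4 → ℝ)) :=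
        Submodule.subset_span (Set.mem_insert _ _)
      have hv : v ∈ Submodule.span ℝ ({u, v} : Set (Fin 4 → ℝ)) :=
        Submodule.subset_span (Set.mem_insert_of_mem _ rfl)
      exact Submodule.smul_mem _ _ (sub_mem (sub_mem (add_mem
        (Submodule.smul_mem _ _ (Submodule.smul_mem _ _ hu))
        (Submodule.smul_mem _ _ (Submodule.smul_mem _ _ hv)))
        (Submodule.smul_mem _ _ (Submodule.smul_mem _ _ hu)))
        (Submodule.smul_mem _ _ (Submodule.smul_mem _ _ hv)))
    · rw [Submodule.span_le]
      rintro x (rfl | rfl)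
      · exact ⟨x, hPu⟩
      · exact ⟨x, hPv⟩
end

section
/- Let g be a 4×4 real symmetric matrix with det g < 0, and let L ∈ so(g) with det L ≠ 0. Let μ₊, μ₋ be the two roots of x² + (tr₂ L)x + det L = 0 with μ₊ > 0 > μ₋, and define P± := ±(L² − μ∓ I)/(μ₊ − μ₋). Then P₊ + P₋ = I, P₊ P₋ = 0 = P₋ P₊, P±² = P±, and P± commutes with L. -/
open Matrix

set_option maxHeartbeats 4000000 in
private lemma ch4 (M : Matrix (Fin 4) (Fin 4) ℝ) :
    M*M*M*M - (trace M) • (M*M*M)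
      + (((trace M)^2 - trace (M*M))/2) • (M*M)
      - (((trace M)^3 - 3*(trace M)*(trace (M*M)) + 2*trace (M*M*M))/6) • M
      + M.det • (1 : Matrix (Fin 4) (Fin 4) ℝ) = 0 := by
  have e1 : (Fin.succ 2 : Fin 4) = 3 := rfl
  have e2 : (Fin.castSucc 2 : Fin 4) = 2 := rfl
  have e3 : ((1 : Fin 4) < Fin.succ 2) = True := by rw [e1]; decide
  ext i j
  fin_cases i <;> fin_cases j <;>
    simp [Matrix.mul_apply, Matrix.det_succ_row_zero, Matrix.trace, Matrix.diag,
      Fin.sum_univ_succ, Matrix.one_apply, Fin.succAbove, e1, e2, e3] <;> ring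

theorem projections_of_nonsimple (g L : Matrix (Fin 4) (Fin 4) ℝ)
    (hsymm : gᵀ = g) (hg : g.det < 0) (hL : Lᵀ * g + g * L = 0) (hdet : L.det ≠ 0)
    (μp μm : ℝ) (hμp : μp ^ 2 + tr2 L * μp + L.det = 0)
    (hμm : μm ^ 2 + tr2 L * μm + L.det = 0) (hμppos : 0 < μp) (hμmneg : μm < 0)
    (Pp Pm : Matrix (Fin 4) (Fin 4) ℝ)
    (hPp : Pp = ((μp - μm)⁻¹) • (L * L - μm • (1 : Matrix (Fin 4) (Fin 4) ℝ)))
    (hPm : Pm = (-(μp - μm)⁻¹) • (L * L - μp • (1 : Matrix (Fin 4) (Fin 4) ℝ))) :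
    Pp + Pm = 1 ∧ Pp * Pm = 0 ∧ Pm * Pp = 0 ∧ Pp * Pp = Pp ∧ Pm * Pm = Pm ∧
    Pp * L = L * Pp ∧ Pm * L = L * Pm := by
  have hgdet : IsUnit g.det := isUnit_iff_ne_zero.mpr (ne_of_lt hg)
  have hgi : g * g⁻¹ = 1 := Matrix.mul_nonsing_inv g hgdet
  have hgi' : g⁻¹ * g = 1 := Matrix.nonsing_inv_mul g hgdet
  have hgl : g * L = -(Lᵀ * g) := eq_neg_of_add_eq_zero_right hL
  -- generic: if g * M = -(Mᵀ * g) then trace M = 0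
  have tr_zero : ∀ M : Matrix (Fin 4) (Fin 4) ℝ, g * M = -(Mᵀ * g) → trace M = 0 := by
    intro M hM
    have h1 : trace M = trace (g⁻¹ * (g * M)) := by
      rw [← Matrix.mul_assoc, hgi', Matrix.one_mul]
    rw [hM, Matrix.mul_neg, trace_neg, Matrix.trace_mul_comm, Matrix.mul_assoc,
      hgi, Matrix.mul_one, Matrix.trace_transpose] at h1
    linarith
  have htr : trace L = 0 := tr_zero L hgl
  have hgl' : Lᵀ * g = -(g * L) := eq_neg_of_add_eq_zero_left hL
  have h3' : (L * L * L)ᵀ * g = -(g * (L * L * L)) := by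
    calc (L*L*L)ᵀ*g = Lᵀ*(Lᵀ*(Lᵀ*g)) := by
          simp only [Matrix.transpose_mul, Matrix.mul_assoc]
      _ = Lᵀ*(Lᵀ*(-(g*L))) := by rw [hgl']
      _ = -((Lᵀ*(Lᵀ*g))*L) := by simp only [Matrix.mul_neg, Matrix.mul_assoc]
      _ = -((Lᵀ*(-(g*L)))*L) := by rw [hgl']
      _ = (Lᵀ*g)*(L*L) := by
          simp only [Matrix.mul_neg, Matrix.neg_mul, neg_neg, Matrix.mul_assoc]
      _ = (-(g*L))*(L*L) := by rw [hgl']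
      _ = -(g*(L*L*L)) := by simp only [Matrix.neg_mul, Matrix.mul_assoc]
  have hgl3 : g * (L * L * L) = -((L * L * L)ᵀ * g) := by rw [h3', neg_neg]
  have htr3 : trace (L * L * L) = 0 := tr_zero _ hgl3
  -- Cayley–Hamilton specialized
  have key : L*L*L*L + tr2 L • (L*L) + L.det • (1 : Matrix (Fin 4) (Fin 4) ℝ) = 0 := by
    have h := ch4 L
    rw [htr, htr3] at h
    have h2 : ((0:ℝ)^3 - 3*0*trace (L*L) + 2*0)/6 = 0 := by ring
    have h3 : ((0:ℝ)^2 - trace (L*L))/2 = tr2 L := by rw [tr2, htr]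
    rw [h2, h3, zero_smul, zero_smul, sub_zero, sub_zero] at h
    exact h
  -- Vieta
  have hd : μp - μm ≠ 0 := ne_of_gt (by linarith)
  have hsum : μp + μm + tr2 L = 0 := by
    have hfac : (μp - μm) * (μp + μm + tr2 L) = 0 := by linear_combination hμp - hμm
    rcases mul_eq_zero.mp hfac with h | h
    · exact absurd h hd
    · exact h
  have hprod : μp * μm = L.det := by linear_combination μp * hsum - hμp
  have htr2 : tr2 L = -(μp + μm) := by linarith
  -- product of the two factors is zero
  have hfac0 : (L * L - μm • (1 : Matrix (Fin 4) (Fin 4) ℝ)) *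
      (L * L - μp • (1 : Matrix (Fin 4) (Fin 4) ℝ)) = 0 := by
    have e : (L * L - μm • (1 : Matrix (Fin 4) (Fin 4) ℝ)) *
        (L * L - μp • (1 : Matrix (Fin 4) (Fin 4) ℝ))
        = L*L*L*L + (-(μp + μm)) • (L*L) + (μp * μm) • (1 : Matrix (Fin 4) (Fin 4) ℝ) := by
      simp only [Matrix.mul_sub, Matrix.sub_mul, smul_mul_assoc, mul_smul_comm,
        Matrix.mul_one, Matrix.one_mul, smul_smul, Matrix.mul_assoc]
      module
    rw [e, ← htr2, hprod]
    exact key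
  have hfac0' : (L * L - μp • (1 : Matrix (Fin 4) (Fin 4) ℝ)) *
      (L * L - μm • (1 : Matrix (Fin 4) (Fin 4) ℝ)) = 0 := by
    have e : (L * L - μp • (1 : Matrix (Fin 4) (Fin 4) ℝ)) *
        (L * L - μm • (1 : Matrix (Fin 4) (Fin 4) ℝ))
        = L*L*L*L + (-(μp + μm)) • (L*L) + (μp * μm) • (1 : Matrix (Fin 4) (Fin 4) ℝ) := by
      simp only [Matrix.mul_sub, Matrix.sub_mul, smul_mul_assoc, mul_smul_comm,
        Matrix.mul_one, Matrix.one_mul, smul_smul, Matrix.mul_assoc]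
      module
    rw [e, ← htr2, hprod]
    exact key
  subst hPp hPm
  have c1 : ((μp - μm)⁻¹) • (L * L - μm • (1 : Matrix (Fin 4) (Fin 4) ℝ)) +
      (-(μp - μm)⁻¹) • (L * L - μp • (1 : Matrix (Fin 4) (Fin 4) ℝ)) = 1 := by
    have e : ((μp - μm)⁻¹) • (L * L - μm • (1 : Matrix (Fin 4) (Fin 4) ℝ)) +
        (-(μp - μm)⁻¹) • (L * L - μp • (1 : Matrix (Fin 4) (Fin 4) ℝ))
        = ((μp - μm)⁻¹ * (μp - μm)) • (1 : Matrix (Fin 4) (Fin 4) ℝ) := by module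
    rw [e, inv_mul_cancel₀ hd, one_smul]
  have c2 : (((μp - μm)⁻¹) • (L * L - μm • (1 : Matrix (Fin 4) (Fin 4) ℝ))) *
      ((-(μp - μm)⁻¹) • (L * L - μp • (1 : Matrix (Fin 4) (Fin 4) ℝ))) = 0 := by
    rw [smul_mul_assoc, mul_smul_comm, hfac0, smul_zero, smul_zero]
  have c3 : ((-(μp - μm)⁻¹) • (L * L - μp • (1 : Matrix (Fin 4) (Fin 4) ℝ))) *
      (((μp - μm)⁻¹) • (L * L - μm • (1 : Matrix (Fin 4) (Fin 4) ℝ))) = 0 := by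
    rw [smul_mul_assoc, mul_smul_comm, hfac0', smul_zero, smul_zero]
  set A := ((μp - μm)⁻¹) • (L * L - μm • (1 : Matrix (Fin 4) (Fin 4) ℝ)) with hA
  set B := (-(μp - μm)⁻¹) • (L * L - μp • (1 : Matrix (Fin 4) (Fin 4) ℝ)) with hB
  have c4 : A * A = A := by
    have : A * A = A * (A + B) - A * B := by rw [Matrix.mul_add]; abel
    rw [this, c1, Matrix.mul_one, c2, sub_zero]
  have c5 : B * B = B := by
    have : B * B = (A + B) * B - A * B := by rw [Matrix.add_mul]; abel
    rw [this, c1, Matrix.one_mul, c2, sub_zero]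
  have c6 : A * L = L * A := by
    rw [hA, Matrix.smul_mul, Matrix.mul_smul]
    congr 1
    rw [Matrix.sub_mul, Matrix.mul_sub, smul_mul_assoc, mul_smul_comm,
      Matrix.one_mul, Matrix.mul_one, Matrix.mul_assoc]
  have c7 : B * L = L * B := by
    rw [hB, Matrix.smul_mul, Matrix.mul_smul]
    congr 1
    rw [Matrix.sub_mul, Matrix.mul_sub, smul_mul_assoc, mul_smul_comm,
      Matrix.one_mul, Matrix.mul_one, Matrix.mul_assoc]
  exact ⟨c1, c2, c3, c4, c5, c6, c7⟩
end

section
/- Let x, y ∈ ℝ³ with x·y ≠ 0, and set μ± = ½(|x|² − |y|² ± √((|x|²−|y|²)² + 4(x·y)²)), a± = ±(μ± x + (x·y) y)/(μ₊ − μ₋), b± = ±(μ± y − (x·y) x)/(μ₊ − μ₋). Then L_{xy} = L_{a₊b₊} + L_{a₋b₋} and L_{a₊b₊} L_{a₋b₋} = 0 = L_{a₋b₋} L_{a₊b₊}, where L_{uv} denotes the 4×4 matrix [[0, uᵀ],[u, W_v]]. -/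
open Matrix

/-- The Minkowski Lorentz bivector L_{uv} = [[0, uᵀ],[u, W_v]], with W_v the
cross-product matrix of v. -/
def Lxy (u v : Fin 3 → ℝ) : Matrix (Fin 4) (Fin 4) ℝ :=
  !![0,     u 0,    u 1,    u 2;
     u 0,   0,      -v 2,   v 1;
     u 1,   v 2,    0,      -v 0;
     u 2,   -v 1,   v 0,    0]

lemma Ladd (u v u' v' : Fin 3 → ℝ) : Lxy u v + Lxy u' v' = Lxy (u + u') (v + v') := by
  ext i j
  fin_cases i <;> fin_cases j <;> simp [Lxy] <;> ring

lemma Lmul_zero (u v u' v' : Fin 3 → ℝ)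
    (h1 : ∀ i j, u i * u' j + v' i * v j = 0)
    (h2 : v 0 * v' 0 + v 1 * v' 1 + v 2 * v' 2 = 0)
    (h3 : u 1 * v' 2 - u 2 * v' 1 = 0) (h4 : u 2 * v' 0 - u 0 * v' 2 = 0)
    (h5 : u 0 * v' 1 - u 1 * v' 0 = 0)
    (h6 : v 1 * u' 2 - v 2 * u' 1 = 0) (h7 : v 2 * u' 0 - v 0 * u' 2 = 0)
    (h8 : v 0 * u' 1 - v 1 * u' 0 = 0) :
    Lxy u v * Lxy u' v' = 0 := by
  ext i j
  fin_cases i <;> fin_cases j <;>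
    simp [Lxy, Matrix.mul_apply, Fin.sum_univ_four] <;>
    linarith [h1 0 0, h1 0 1, h1 0 2, h1 1 0, h1 1 1, h1 1 2, h1 2 0, h1 2 1, h1 2 2,
      h2, h3, h4, h5, h6, h7, h8]

theorem minkowski_orthogonal_decomposition (x y : Fin 3 → ℝ) (hxy : x ⬝ᵥ y ≠ 0)
    (μp μm : ℝ)
    (hμp : μp = ((x ⬝ᵥ x - y ⬝ᵥ y) + Real.sqrt ((x ⬝ᵥ x - y ⬝ᵥ y) ^ 2 + 4 * (x ⬝ᵥ y) ^ 2)) / 2)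
    (hμm : μm = ((x ⬝ᵥ x - y ⬝ᵥ y) - Real.sqrt ((x ⬝ᵥ x - y ⬝ᵥ y) ^ 2 + 4 * (x ⬝ᵥ y) ^ 2)) / 2)
    (ap am bp bm : Fin 3 → ℝ)
    (hap : ap = ((μp - μm)⁻¹) • (μp • x + (x ⬝ᵥ y) • y))
    (ham : am = (-(μp - μm)⁻¹) • (μm • x + (x ⬝ᵥ y) • y))
    (hbp : bp = ((μp - μm)⁻¹) • (μp • y - (x ⬝ᵥ y) • x))
    (hbm : bm = (-(μp - μm)⁻¹) • (μm • y - (x ⬝ᵥ y) • x)) :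
    Lxy x y = Lxy ap bp + Lxy am bm ∧
    Lxy ap bp * Lxy am bm = 0 ∧ Lxy am bm * Lxy ap bp = 0 := by
  have hA : 0 < (x ⬝ᵥ x - y ⬝ᵥ y) ^ 2 + 4 * (x ⬝ᵥ y) ^ 2 := by positivity
  have hs2 := Real.sq_sqrt hA.le
  have htv : μp - μm = Real.sqrt ((x ⬝ᵥ x - y ⬝ᵥ y) ^ 2 + 4 * (x ⬝ᵥ y) ^ 2) := by
    rw [hμp, hμm]; ring
  have ht : μp - μm ≠ 0 := by rw [htv]; exact (Real.sqrt_pos.mpr hA).ne'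
  have hprod : μp * μm = -((x ⬝ᵥ y) ^ 2) := by
    rw [hμp, hμm]; linear_combination (-(1 / 4) : ℝ) * hs2
  have hsum : μp + μm = x ⬝ᵥ x - y ⬝ᵥ y := by rw [hμp, hμm]; ring
  have hc : x ⬝ᵥ y = x 0 * y 0 + x 1 * y 1 + x 2 * y 2 := by
    simp [dotProduct, Fin.sum_univ_three]
  have hxx : x ⬝ᵥ x = x 0 * x 0 + x 1 * x 1 + x 2 * x 2 := by
    simp [dotProduct, Fin.sum_univ_three]
  have hyy : y ⬝ᵥ y = y 0 * y 0 + y 1 * y 1 + y 2 * y 2 := by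
    simp [dotProduct, Fin.sum_univ_three]
  have hapi : ∀ i, ap i = (μp - μm)⁻¹ * (μp * x i + (x ⬝ᵥ y) * y i) := by
    intro i; rw [hap]; simp [mul_comm]
  have hami : ∀ i, am i = -((μp - μm)⁻¹ * (μm * x i + (x ⬝ᵥ y) * y i)) := by
    intro i; rw [ham]; simp
  have hbpi : ∀ i, bp i = (μp - μm)⁻¹ * (μp * y i - (x ⬝ᵥ y) * x i) := by
    intro i; rw [hbp]; simp [mul_comm]
  have hbmi : ∀ i, bm i = -((μp - μm)⁻¹ * (μm * y i - (x ⬝ᵥ y) * x i)) := by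
    intro i; rw [hbm]; simp
  set T := (μp - μm)⁻¹ with hT
  refine ⟨?_, ?_, ?_⟩
  · have hxs : ap + am = x := by
      funext i
      simp only [Pi.add_apply, hapi, hami]
      linear_combination x i * inv_mul_cancel₀ ht
    have hys : bp + bm = y := by
      funext i
      simp only [Pi.add_apply, hbpi, hbmi]
      linear_combination y i * inv_mul_cancel₀ ht
    rw [Ladd, hxs, hys]
  · apply Lmul_zero
    · intro i j
      simp only [hapi, hami, hbpi, hbmi]
      linear_combination (-(T ^ 2) * (x i * x j + y i * y j)) * hprod
    · simp only [hbpi, hbmi]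
      linear_combination (-(T ^ 2) * (y ⬝ᵥ y)) * hprod + (T ^ 2 * (x ⬝ᵥ y) ^ 2) * hsum +
        (T ^ 2 * (μp * μm)) * hyy + (-(T ^ 2) * (x ⬝ᵥ y) * (μp + μm)) * hc +
        (T ^ 2 * (x ⬝ᵥ y) ^ 2) * hxx
    · simp only [hapi, hbmi]
      linear_combination (-(T ^ 2) * (x 1 * y 2 - x 2 * y 1)) * hprod
    · simp only [hapi, hbmi]
      linear_combination (-(T ^ 2) * (x 2 * y 0 - x 0 * y 2)) * hprod
    · simp only [hapi, hbmi]
      linear_combination (-(T ^ 2) * (x 0 * y 1 - x 1 * y 0)) * hprod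
    · simp only [hbpi, hami]
      linear_combination (T ^ 2 * (x 1 * y 2 - x 2 * y 1)) * hprod
    · simp only [hbpi, hami]
      linear_combination (T ^ 2 * (x 2 * y 0 - x 0 * y 2)) * hprod
    · simp only [hbpi, hami]
      linear_combination (T ^ 2 * (x 0 * y 1 - x 1 * y 0)) * hprod
  · apply Lmul_zero
    · intro i j
      simp only [hapi, hami, hbpi, hbmi]
      linear_combination (-(T ^ 2) * (x i * x j + y i * y j)) * hprod
    · simp only [hbpi, hbmi]
      linear_combination (-(T ^ 2) * (y ⬝ᵥ y)) * hprod + (T ^ 2 * (x ⬝ᵥ y) ^ 2) * hsum +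
        (T ^ 2 * (μp * μm)) * hyy + (-(T ^ 2) * (x ⬝ᵥ y) * (μp + μm)) * hc +
        (T ^ 2 * (x ⬝ᵥ y) ^ 2) * hxx
    · simp only [hami, hbpi]
      linear_combination (-(T ^ 2) * (x 1 * y 2 - x 2 * y 1)) * hprod
    · simp only [hami, hbpi]
      linear_combination (-(T ^ 2) * (x 2 * y 0 - x 0 * y 2)) * hprod
    · simp only [hami, hbpi]
      linear_combination (-(T ^ 2) * (x 0 * y 1 - x 1 * y 0)) * hprod
    · simp only [hbmi, hapi]
      linear_combination (T ^ 2 * (x 1 * y 2 - x 2 * y 1)) * hprod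
    · simp only [hbmi, hapi]
      linear_combination (T ^ 2 * (x 2 * y 0 - x 0 * y 2)) * hprod
    · simp only [hbmi, hapi]
      linear_combination (T ^ 2 * (x 0 * y 1 - x 1 * y 0)) * hprod
end

section
/- Let g be a 4×4 real symmetric matrix with det g < 0 and let L ∈ so(g) be simple, i.e., L³ + (tr₂ L)·L = 0. If tr₂ L < 0, then exp(L) = I + (sinh√(−tr₂ L)/√(−tr₂ L))·L + ((1 − cosh√(−tr₂ L))/(tr₂ L))·L². If tr₂ L > 0, then exp(L) = I + (sin√(tr₂ L)/√(tr₂ L))·L + ((1 − cos√(tr₂ L))/(tr₂ L))·L². If tr₂ L = 0, then exp(L) = I + L + ½L². -/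
open Matrix
open scoped Nat

private lemma pow_odd_even (L : Matrix (Fin 4) (Fin 4) ℝ) (c : ℝ)
    (h3 : L ^ 3 = (-c) • L) :
    (∀ k, L ^ (2 * k + 1) = (-c) ^ k • L) ∧
      (∀ k, L ^ (2 * k + 2) = (-c) ^ k • (L * L)) := by
  have hodd : ∀ k, L ^ (2 * k + 1) = (-c) ^ k • L := by
    intro k
    induction k with
    | zero => simp
    | succ n ih =>
      have he : 2 * (n + 1) + 1 = (2 * n + 1) + 2 := by ring
      rw [he, pow_add, ih, smul_mul_assoc, ← pow_succ', h3, smul_smul, ← pow_succ]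
  refine ⟨hodd, fun k => ?_⟩
  have he : 2 * k + 2 = (2 * k + 1) + 1 := by ring
  rw [he, pow_succ, hodd k, smul_mul_assoc]

private lemma exp_key (L : Matrix (Fin 4) (Fin 4) ℝ) (c : ℝ)
    (h3 : L ^ 3 = (-c) • L) {a b : ℝ}
    (ha : HasSum (fun k : ℕ => (-c) ^ k / (2 * k + 1)!) a)
    (hb : HasSum (fun k : ℕ => (-c) ^ k / (2 * k + 2)!) b) :
    NormedSpace.exp L = 1 + a • L + b • (L * L) := by
  obtain ⟨hodd, heven⟩ := pow_odd_even L c h3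
  have hO : HasSum (fun k : ℕ => ((2 * k + 1)! : ℝ)⁻¹ • L ^ (2 * k + 1)) (a • L) := by
    have h := ha.smul_const L
    refine h.congr_fun fun k => ?_
    rw [hodd k, smul_smul, div_eq_mul_inv, mul_comm]
  have hE : HasSum (fun k : ℕ => ((2 * k)! : ℝ)⁻¹ • L ^ (2 * k)) (b • (L * L) + 1) := by
    have hshift : HasSum
        (fun k : ℕ => ((2 * (k + 1))! : ℝ)⁻¹ • L ^ (2 * (k + 1))) (b • (L * L)) := by
      have h := hb.smul_const (L * L)
      refine h.congr_fun fun k => ?_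
      show ((2 * k + 2)! : ℝ)⁻¹ • L ^ (2 * k + 2) = _
      rw [heven k, smul_smul, div_eq_mul_inv, mul_comm]
    have h := (hasSum_nat_add_iff
      (f := fun k : ℕ => ((2 * k)! : ℝ)⁻¹ • L ^ (2 * k)) 1).mp hshift
    simpa using h
  have hsum := HasSum.even_add_odd (f := fun n : ℕ => ((n)! : ℝ)⁻¹ • L ^ n) hE hO
  rw [NormedSpace.exp_eq_tsum (𝕂 := ℝ)]
  show (∑' n : ℕ, ((n)! : ℝ)⁻¹ • L ^ n) = _
  rw [hsum.tsum_eq]; abel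

theorem exp_of_simple_bivector (g L : Matrix (Fin 4) (Fin 4) ℝ)
    (hsymm : gᵀ = g) (hg : g.det < 0) (hL : Lᵀ * g + g * L = 0)
    (hsimple : L ^ 3 + tr2 L • L = 0) :
    (tr2 L < 0 →
      NormedSpace.exp L = 1
        + (Real.sinh (Real.sqrt (-(tr2 L))) / Real.sqrt (-(tr2 L))) • L
        + ((1 - Real.cosh (Real.sqrt (-(tr2 L)))) / tr2 L) • (L * L)) ∧
    (0 < tr2 L →
      NormedSpace.exp L = 1
        + (Real.sin (Real.sqrt (tr2 L)) / Real.sqrt (tr2 L)) • L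
        + ((1 - Real.cos (Real.sqrt (tr2 L))) / tr2 L) • (L * L)) ∧
    (tr2 L = 0 →
      NormedSpace.exp L = 1 + L + (2 : ℝ)⁻¹ • (L * L)) := by
  set c := tr2 L with hc
  have h3 : L ^ 3 = (-c) • L := by
    rw [neg_smul]
    exact eq_neg_of_add_eq_zero_left hsimple
  refine ⟨?_, ?_, ?_⟩
  · -- c < 0 : hyperbolic case
    intro hneg
    set x := Real.sqrt (-c) with hx
    have hx0 : 0 < x := Real.sqrt_pos.mpr (by linarith)
    have hx2 : x ^ 2 = -c := Real.sq_sqrt (by linarith)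
    have hcne : c ≠ 0 := ne_of_lt hneg
    have ha : HasSum (fun k : ℕ => (-c) ^ k / (2 * k + 1)!) (Real.sinh x / x) := by
      have h := (Real.hasSum_sinh x).div_const x
      refine h.congr_fun fun k => ?_
      rw [← hx2, ← pow_mul]
      field_simp
      ring
    have hb : HasSum (fun k : ℕ => (-c) ^ k / (2 * k + 2)!) ((1 - Real.cosh x) / c) := by
      have hshift : HasSum (fun k : ℕ => x ^ (2 * (k + 1)) / (2 * (k + 1))!)
          (Real.cosh x - 1) := by
        rw [hasSum_nat_add_iff (f := fun n => x ^ (2 * n) / (2 * n)!) 1]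
        simpa using Real.hasSum_cosh x
      have heq : (1 - Real.cosh x) / c = (Real.cosh x - 1) / (-c) := by
        rw [div_neg, ← neg_div, neg_sub]
      rw [heq]
      have h := hshift.div_const (-c)
      refine h.congr_fun fun k => ?_
      have h1 : x ^ (2 * (k + 1)) = (-c) ^ (k + 1) := by rw [← hx2, ← pow_mul]
      have h2 : 2 * (k + 1) = 2 * k + 2 := by ring
      rw [h1, h2, pow_succ]
      field_simp
    exact exp_key L c h3 ha hb
  · -- c > 0 : trigonometric case
    intro hpos
    set x := Real.sqrt c with hx
    have hx0 : 0 < x := Real.sqrt_pos.mpr hpos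
    have hx2 : x ^ 2 = c := Real.sq_sqrt hpos.le
    have hcne : c ≠ 0 := ne_of_gt hpos
    have hpow : ∀ k : ℕ, (-c) ^ k = (-1) ^ k * x ^ (2 * k) := by
      intro k
      rw [← hx2, neg_pow, ← pow_mul]
    have ha : HasSum (fun k : ℕ => (-c) ^ k / (2 * k + 1)!) (Real.sin x / x) := by
      have h := (Real.hasSum_sin x).div_const x
      refine h.congr_fun fun k => ?_
      rw [hpow k]
      field_simp
      ring
    have hb : HasSum (fun k : ℕ => (-c) ^ k / (2 * k + 2)!) ((1 - Real.cos x) / c) := by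
      have hshift : HasSum
          (fun k : ℕ => (-1 : ℝ) ^ (k + 1) * x ^ (2 * (k + 1)) / (2 * (k + 1))!)
          (Real.cos x - 1) := by
        rw [hasSum_nat_add_iff (f := fun n => (-1 : ℝ) ^ n * x ^ (2 * n) / (2 * n)!) 1]
        simpa using Real.hasSum_cos x
      have heq : (1 - Real.cos x) / c = (Real.cos x - 1) / (-c) := by
        rw [div_neg, ← neg_div, neg_sub]
      rw [heq]
      have h := hshift.div_const (-c)
      refine h.congr_fun fun k => ?_
      have h1 : (-1 : ℝ) ^ (k + 1) * x ^ (2 * (k + 1)) = (-c) ^ (k + 1) := (hpow (k + 1)).symm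
      have h2 : 2 * (k + 1) = 2 * k + 2 := by ring
      rw [h1, h2, pow_succ]
      field_simp
    exact exp_key L c h3 ha hb
  · -- c = 0 case
    intro h0
    have ha : HasSum (fun k : ℕ => (-c) ^ k / (2 * k + 1)!) 1 := by
      rw [h0]
      have hz : ∀ k : ℕ, k ≠ 0 → ((-0 : ℝ)) ^ k / (2 * k + 1)! = 0 := by
        intro k hk
        simp [zero_pow hk]
      have h := hasSum_single (f := fun k : ℕ => ((-0 : ℝ)) ^ k / (2 * k + 1)!) 0 hz
      simpa using h
    have hb : HasSum (fun k : ℕ => (-c) ^ k / (2 * k + 2)!) (2 : ℝ)⁻¹ := by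
      rw [h0]
      have hz : ∀ k : ℕ, k ≠ 0 → ((-0 : ℝ)) ^ k / (2 * k + 2)! = 0 := by
        intro k hk
        simp [zero_pow hk]
      have h := hasSum_single (f := fun k : ℕ => ((-0 : ℝ)) ^ k / (2 * k + 2)!) 0 hz
      convert h using 2
      norm_num [Nat.factorial]
    have h := exp_key L c h3 ha hb
    simpa using h
end

section
/- Let g be a 4×4 real symmetric invertible matrix and Λ a proper Lorentz transformation: Λᵀ g Λ = g and det Λ = 1. Then tr₃ Λ = tr Λ, where tr₃ Λ is the coefficient of t³ in det(I + tΛ). Consequently Λ⁴ − (tr Λ)Λ³ + (tr₂ Λ)Λ² − (tr Λ)Λ + I = 0. -/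
open Matrix Polynomial

/-- The k-th order trace of a 4×4 matrix: the coefficient of t^k in det(I + tM). -/
noncomputable def trk (k : ℕ) (M : Matrix (Fin 4) (Fin 4) ℝ) : ℝ :=
  ((1 + (X : ℝ[X]) • M.map C).det).coeff k

lemma det_fin_four' {R : Type*} [CommRing R] (A : Matrix (Fin 4) (Fin 4) R) : A.det =
    A 0 0 * (A 1 1 * (A 2 2 * A 3 3 - A 2 3 * A 3 2) - A 1 2 * (A 2 1 * A 3 3 - A 2 3 * A 3 1)
      + A 1 3 * (A 2 1 * A 3 2 - A 2 2 * A 3 1))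
  - A 0 1 * (A 1 0 * (A 2 2 * A 3 3 - A 2 3 * A 3 2) - A 1 2 * (A 2 0 * A 3 3 - A 2 3 * A 3 0)
      + A 1 3 * (A 2 0 * A 3 2 - A 2 2 * A 3 0))
  + A 0 2 * (A 1 0 * (A 2 1 * A 3 3 - A 2 3 * A 3 1) - A 1 1 * (A 2 0 * A 3 3 - A 2 3 * A 3 0)
      + A 1 3 * (A 2 0 * A 3 1 - A 2 1 * A 3 0))
  - A 0 3 * (A 1 0 * (A 2 1 * A 3 2 - A 2 2 * A 3 1) - A 1 1 * (A 2 0 * A 3 2 - A 2 2 * A 3 0)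
      + A 1 2 * (A 2 0 * A 3 1 - A 2 1 * A 3 0)) := by
  rw [det_succ_row_zero]
  simp only [Fin.sum_univ_four, det_fin_three, submatrix_apply]
  simp [Fin.succAbove, Fin.lt_def, Fin.succ, Fin.castSucc]
  norm_num [Fin.ext_iff]
  ring

noncomputable def e2x (M : Matrix (Fin 4) (Fin 4) ℝ) : ℝ :=
  (M 0 0 * M 1 1 - M 0 1 * M 1 0) + (M 0 0 * M 2 2 - M 0 2 * M 2 0) +
  (M 0 0 * M 3 3 - M 0 3 * M 3 0) + (M 1 1 * M 2 2 - M 1 2 * M 2 1) +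
  (M 1 1 * M 3 3 - M 1 3 * M 3 1) + (M 2 2 * M 3 3 - M 2 3 * M 3 2)

noncomputable def e3x (M : Matrix (Fin 4) (Fin 4) ℝ) : ℝ :=
  (M 0 0 * (M 1 1 * M 2 2 - M 1 2 * M 2 1) - M 0 1 * (M 1 0 * M 2 2 - M 1 2 * M 2 0)
    + M 0 2 * (M 1 0 * M 2 1 - M 1 1 * M 2 0)) +
  (M 0 0 * (M 1 1 * M 3 3 - M 1 3 * M 3 1) - M 0 1 * (M 1 0 * M 3 3 - M 1 3 * M 3 0)
    + M 0 3 * (M 1 0 * M 3 1 - M 1 1 * M 3 0)) +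
  (M 0 0 * (M 2 2 * M 3 3 - M 2 3 * M 3 2) - M 0 2 * (M 2 0 * M 3 3 - M 2 3 * M 3 0)
    + M 0 3 * (M 2 0 * M 3 2 - M 2 2 * M 3 0)) +
  (M 1 1 * (M 2 2 * M 3 3 - M 2 3 * M 3 2) - M 1 2 * (M 2 1 * M 3 3 - M 2 3 * M 3 1)
    + M 1 3 * (M 2 1 * M 3 2 - M 2 2 * M 3 1))

lemma trace_fin_four' (A : Matrix (Fin 4) (Fin 4) ℝ) :
    Matrix.trace A = A 0 0 + A 1 1 + A 2 2 + A 3 3 := by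
  simp [Matrix.trace, Fin.sum_univ_four]

set_option maxHeartbeats 2000000 in
lemma detA (M : Matrix (Fin 4) (Fin 4) ℝ) :
    (1 + (X : ℝ[X]) • M.map C).det =
      C 1 + C (Matrix.trace M) * X + C (e2x M) * X ^ 2 + C (e3x M) * X ^ 3
        + C M.det * X ^ 4 := by
  have hE : ∀ i j, (1 + (X : ℝ[X]) • M.map C) i j
      = (if i = j then 1 else 0) + X * C (M i j) := by
    intro i j
    by_cases h : i = j <;> simp [h, Matrix.one_apply]
  rw [det_fin_four', det_fin_four', trace_fin_four']
  simp only [hE]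
  norm_num [e2x, e3x, _root_.map_add, _root_.map_sub, _root_.map_mul,
    show ((0:Fin 4) = 1) = False from by simp, show ((0:Fin 4) = 2) = False from by simp,
    show ((0:Fin 4) = 3) = False from by simp, show ((1:Fin 4) = 0) = False from by simp,
    show ((1:Fin 4) = 2) = False from by simp, show ((1:Fin 4) = 3) = False from by simp,
    show ((2:Fin 4) = 0) = False from by simp, show ((2:Fin 4) = 1) = False from by simp,
    show ((2:Fin 4) = 3) = False from by simp, show ((3:Fin 4) = 0) = False from by simp,
    show ((3:Fin 4) = 1) = False from by simp, show ((3:Fin 4) = 2) = False from by simp]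
  ring

lemma trk_two (M : Matrix (Fin 4) (Fin 4) ℝ) :
    trk 2 M = (Matrix.trace M ^ 2 - Matrix.trace (M * M)) / 2 := by
  have h : trk 2 M = e2x M := by
    rw [trk, detA]
    simp [coeff_X, coeff_one]
  rw [h]
  simp only [e2x, trace_fin_four', Matrix.mul_apply, Fin.sum_univ_four]
  ring

lemma trk_coeff (M : Matrix (Fin 4) (Fin 4) ℝ) (k : ℕ) (hk : k ≤ 4) :
    trk k M = ((-M).charpoly).coeff (4 - k) := by
  have h1 : (1 : Matrix (Fin 4) (Fin 4) ℝ[X]) + (X : ℝ[X]) • M.map C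
      = 1 - (X : ℝ[X]) • (-M).map C := by
    ext i j
    simp [Matrix.map_apply, sub_eq_add_neg]
  have h2 : ((-M).charpoly).natDegree = 4 := by
    simp [charpoly_natDegree_eq_dim]
  rw [trk, h1]
  have h3 : (1 - (X : ℝ[X]) • (-M).map C).det = ((-M).charpoly).reverse :=
    ((-M).reverse_charpoly).symm
  rw [h3, coeff_reverse, h2, revAt_le hk]

theorem lorentz_trace13 (g Λ : Matrix (Fin 4) (Fin 4) ℝ)
    (hsymm : gᵀ = g) (hinv : IsUnit g.det)
    (hΛ : Λᵀ * g * Λ = g) (hdet : Λ.det = 1) :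
    trk 3 Λ = Matrix.trace Λ ∧
    Λ ^ 4 - Matrix.trace Λ • Λ ^ 3
      + ((Matrix.trace Λ ^ 2 - Matrix.trace (Λ * Λ)) / 2) • Λ ^ 2
      - Matrix.trace Λ • Λ + 1 = 0 := by
  have hU : IsUnit Λ.det := by rw [hdet]; exact isUnit_one
  set N := Λ⁻¹ with hNdef
  have hNg : N = g⁻¹ * Λᵀ * g := by
    refine inv_eq_left_inv ?_
    simp only [mul_assoc]
    rw [← mul_assoc Λᵀ g Λ, hΛ, nonsing_inv_mul g hinv]
  have htrN : Matrix.trace N = Matrix.trace Λ := by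
    rw [hNg, trace_mul_comm, ← mul_assoc, mul_nonsing_inv g hinv, one_mul, trace_transpose]
  -- det (1 + X Λ) is the charpoly of -N
  have hmat : (1 : Matrix (Fin 4) (Fin 4) ℝ[X]) + (X : ℝ[X]) • Λ.map C
      = Λ.map C * charmatrix (-N) := by
    have hc : charmatrix (-N) = (X : ℝ[X]) • (1 : Matrix (Fin 4) (Fin 4) ℝ[X]) + N.map C := by
      ext i j
      by_cases h : i = j <;>
        simp [charmatrix_apply, Matrix.map_apply, Matrix.one_apply, h, diagonal]
    rw [hc, mul_add, mul_smul_comm, mul_one, ← Matrix.map_mul, mul_nonsing_inv Λ hU,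
      Matrix.map_one C (map_zero C) (map_one C), add_comm]
  have hdetN : (1 + (X : ℝ[X]) • Λ.map C).det = (-N).charpoly := by
    have hdc : (Λ.map (C : ℝ → ℝ[X])).det = C Λ.det := by
      rw [← RingHom.mapMatrix_apply, ← RingHom.map_det]
    rw [hmat, det_mul, hdc, hdet, _root_.map_one, one_mul, Matrix.charpoly]
  have part1 : trk 3 Λ = Matrix.trace Λ := by
    have h := trace_eq_neg_charpoly_coeff (-N)
    rw [trace_neg] at h
    rw [trk, hdetN]
    have hcard : Fintype.card (Fin 4) - 1 = 3 := by simp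
    rw [hcard] at h
    rw [← neg_eq_iff_eq_neg] at h
    rw [← h, neg_neg, htrN]
  refine ⟨part1, ?_⟩
  -- Cayley–Hamilton for -Λ
  set P := (-Λ).charpoly with hPdef
  have hP4 : P.natDegree = 4 := by simp [hPdef, charpoly_natDegree_eq_dim]
  have hc0 : P.coeff 0 = 1 := by
    have h := det_eq_sign_charpoly_coeff (-Λ)
    rw [det_neg] at h
    simp [hdet] at h
    linarith [h]
  have hc1 : P.coeff 1 = Matrix.trace Λ := by
    have := trk_coeff Λ 3 (by norm_num)
    rw [part1] at this
    exact this.symm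
  have hc2 : P.coeff 2 = (Matrix.trace Λ ^ 2 - Matrix.trace (Λ * Λ)) / 2 := by
    have := trk_coeff Λ 2 (by norm_num)
    rw [trk_two] at this
    exact this.symm
  have hc3 : P.coeff 3 = Matrix.trace Λ := by
    have h := trace_eq_neg_charpoly_coeff (-Λ)
    rw [trace_neg] at h
    have hcard : Fintype.card (Fin 4) - 1 = 3 := by simp
    rw [hcard] at h
    linarith [h]
  have hc4 : P.coeff 4 = 1 := by
    have := (charpoly_monic (-Λ)).coeff_natDegree
    rwa [hP4] at this
  have hCH := aeval_self_charpoly (-Λ)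
  rw [aeval_eq_sum_range (R := ℝ)] at hCH
  rw [show ((-Λ).charpoly).natDegree = 4 from hP4] at hCH
  simp only [Finset.sum_range_succ, Finset.sum_range_zero, zero_add, ← hPdef,
    hc0, hc1, hc2, hc3, hc4, pow_zero, pow_one, one_smul] at hCH
  have he : (-Λ) ^ 2 = Λ ^ 2 := Even.neg_pow (by decide) Λ
  have ho3 : (-Λ) ^ 3 = -(Λ ^ 3) := Odd.neg_pow (by decide) Λ
  have he4 : (-Λ) ^ 4 = Λ ^ 4 := Even.neg_pow (by decide) Λ
  rw [he, ho3, he4] at hCH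
  simp only [smul_neg] at hCH
  abel_nf at hCH ⊢
  exact hCH
end

section
/- Let g be a 4×4 real symmetric invertible matrix and Λ a proper Lorentz transformation (Λᵀ g Λ = g, det Λ = 1). Then Λ² + Λ⁻² = −(tr₂ Λ)·I + (tr Λ)·(Λ + Λ⁻¹) and Λ³ + Λ⁻³ = (2 − tr₂ Λ)(tr Λ)·I + (tr(Λ)² − tr₂ Λ − 1)·(Λ + Λ⁻¹). -/
open Matrix

theorem lorentz_symmetric_powers (g Λ : Matrix (Fin 4) (Fin 4) ℝ)
    (hsymm : gᵀ = g) (hinv : IsUnit g.det)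
    (hΛ : Λᵀ * g * Λ = g) (hdet : Λ.det = 1) :
    Λ ^ 2 + Λ⁻¹ ^ 2
      = (-((Matrix.trace Λ ^ 2 - Matrix.trace (Λ * Λ)) / 2)) • (1 : Matrix (Fin 4) (Fin 4) ℝ)
        + Matrix.trace Λ • (Λ + Λ⁻¹) ∧
    Λ ^ 3 + Λ⁻¹ ^ 3
      = ((2 - (Matrix.trace Λ ^ 2 - Matrix.trace (Λ * Λ)) / 2) * Matrix.trace Λ)
          • (1 : Matrix (Fin 4) (Fin 4) ℝ)
        + (Matrix.trace Λ ^ 2 - (Matrix.trace Λ ^ 2 - Matrix.trace (Λ * Λ)) / 2 - 1)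
          • (Λ + Λ⁻¹) := by
  classical
  have hu : IsUnit Λ.det := hdet ▸ isUnit_one
  have hg1 : g * g⁻¹ = 1 := Matrix.mul_nonsing_inv g hinv
  have hg2 : g⁻¹ * g = 1 := Matrix.nonsing_inv_mul g hinv
  have h2 : Λ⁻¹ * Λ = 1 := Matrix.nonsing_inv_mul Λ hu
  -- Λ⁻¹ is conjugate to Λᵀ
  have hconj : Λ⁻¹ = g⁻¹ * Λᵀ * g := by
    refine Matrix.inv_eq_left_inv ?_
    calc g⁻¹ * Λᵀ * g * Λ = g⁻¹ * (Λᵀ * g * Λ) := by simp only [Matrix.mul_assoc]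
    _ = 1 := by rw [hΛ, hg2]
  have htr1 : Matrix.trace Λ⁻¹ = Matrix.trace Λ := by
    rw [hconj, Matrix.trace_mul_comm (g⁻¹ * Λᵀ) g, ← Matrix.mul_assoc, hg1, Matrix.one_mul,
      Matrix.trace_transpose]
  have htr2 : Matrix.trace (Λ⁻¹ * Λ⁻¹) = Matrix.trace (Λ * Λ) := by
    rw [hconj]
    have h3 : g⁻¹ * Λᵀ * g * (g⁻¹ * Λᵀ * g) = g⁻¹ * (Λ * Λ)ᵀ * g := by
      rw [Matrix.transpose_mul]
      calc g⁻¹ * Λᵀ * g * (g⁻¹ * Λᵀ * g) = g⁻¹ * Λᵀ * (g * g⁻¹) * Λᵀ * g := by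
            simp only [Matrix.mul_assoc]
      _ = g⁻¹ * (Λᵀ * Λᵀ) * g := by rw [hg1]; simp only [Matrix.mul_assoc, Matrix.mul_one]
    rw [h3, Matrix.trace_mul_comm (g⁻¹ * (Λ * Λ)ᵀ) g, ← Matrix.mul_assoc, hg1, Matrix.one_mul,
      Matrix.trace_transpose]
  -- the characteristic polynomial of Λ⁻¹ is the reverse of that of Λ
  have hrev : (Λ⁻¹).charpoly = Λ.charpolyRev := by
    have key : (1 - (Polynomial.X : Polynomial ℝ) • Λ.map Polynomial.C)
        = ((Λ⁻¹).map Polynomial.C - (Polynomial.X : Polynomial ℝ) • 1) * Λ.map Polynomial.C := by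
      rw [sub_mul, ← Matrix.map_mul, h2,
        Matrix.map_one Polynomial.C (map_zero Polynomial.C) (map_one Polynomial.C),
        Matrix.smul_mul, Matrix.one_mul]
    have hdc : (Λ.map Polynomial.C).det = 1 := by
      rw [show Λ.map (Polynomial.C : ℝ →+* Polynomial ℝ)
          = (Polynomial.C : ℝ →+* Polynomial ℝ).mapMatrix Λ from rfl,
        ← RingHom.map_det, hdet, _root_.map_one]
    have hscal : Matrix.scalar (Fin 4) (Polynomial.X : Polynomial ℝ)
        = (Polynomial.X : Polynomial ℝ) • 1 := by
      ext i j
      simp [Matrix.scalar_apply, Matrix.one_apply, Matrix.diagonal, Matrix.smul_apply]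
    rw [Matrix.charpolyRev, key, Matrix.det_mul, hdc, mul_one, Matrix.charpoly, charmatrix, hscal]
    have h3 : (Λ⁻¹).map Polynomial.C - (Polynomial.X : Polynomial ℝ) • 1
        = -((Polynomial.X : Polynomial ℝ) • 1
            - (Polynomial.C : ℝ →+* Polynomial ℝ).mapMatrix Λ⁻¹) := by
      simp [RingHom.mapMatrix_apply]
    rw [h3, Matrix.det_neg]
    norm_num
  -- coefficients of the characteristic polynomial
  set p := Λ.charpoly with hp
  have hnd : p.natDegree = 4 := by
    rw [hp, Matrix.charpoly_natDegree_eq_dim]; simp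
  have hc4 : p.coeff 4 = 1 := by
    have := Λ.charpoly_monic
    rw [Polynomial.Monic, Polynomial.leadingCoeff, hnd] at this
    exact this
  have hc3 : p.coeff 3 = - Matrix.trace Λ := by
    have := Matrix.trace_eq_neg_charpoly_coeff Λ
    simp only [Fintype.card_fin] at this
    rw [← hp, show (4:ℕ) - 1 = 3 from rfl] at this
    linarith
  have hc0 : p.coeff 0 = 1 := by
    have := Matrix.det_eq_sign_charpoly_coeff Λ
    simp only [Fintype.card_fin, hdet] at this
    rw [← hp] at this
    norm_num at this
    linarith
  have hc1 : p.coeff 1 = - Matrix.trace Λ := by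
    have h1 : (Λ⁻¹).charpoly.coeff 3 = - Matrix.trace Λ⁻¹ := by
      have := Matrix.trace_eq_neg_charpoly_coeff Λ⁻¹
      simp only [Fintype.card_fin] at this
      rw [show (4:ℕ) - 1 = 3 from rfl] at this
      linarith
    rw [hrev, ← Matrix.reverse_charpoly, Polynomial.coeff_reverse, ← hp, hnd,
      Polynomial.revAt_le (by norm_num)] at h1
    rw [show (4:ℕ) - 3 = 1 from rfl] at h1
    rw [h1, htr1]
  -- powers of Λ and Λ⁻¹
  set B := Λ⁻¹ with hB
  set t := Matrix.trace Λ with ht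
  set c2 := p.coeff 2 with hcc2
  have hpow : ∀ i : ℕ, B ^ i * Λ ^ i = 1 := by
    intro i
    induction i with
    | zero => simp
    | succ n ih =>
      rw [pow_succ, pow_succ']
      calc B ^ n * B * (Λ * Λ ^ n) = B ^ n * (B * Λ) * Λ ^ n := by
            simp only [Matrix.mul_assoc]
      _ = 1 := by rw [h2, Matrix.mul_one, ih]
  have key : ∀ i j : ℕ, B ^ i * Λ ^ (i + j) = Λ ^ j := by
    intro i j
    rw [pow_add, ← Matrix.mul_assoc, hpow, Matrix.one_mul]
  have key2 : ∀ i j : ℕ, B ^ (j + i) * Λ ^ i = B ^ j := by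
    intro i j
    rw [pow_add, Matrix.mul_assoc, hpow, Matrix.mul_one]
  have k12 := key 1 1; have k13 := key 1 2; have k14 := key 1 3
  have k22 := key 2 0; have k23 := key 2 1; have k24 := key 2 2
  have k33 := key 3 0; have k34 := key 3 1
  have k21 := key2 1 1; have k31 := key2 1 2; have k32 := key2 2 1
  simp only [pow_one, pow_zero, Nat.reduceAdd] at k12 k13 k14 k22 k23 k24 k33 k34 k21 k31 k32
  -- Cayley–Hamilton
  have hch := Λ.aeval_self_charpoly
  rw [Polynomial.aeval_eq_sum_range' (n := 5) (by rw [← hp, hnd]; norm_num)] at hch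
  rw [← hp] at hch
  simp only [Finset.sum_range_succ, Finset.sum_range_zero, zero_add, pow_zero, pow_one,
    hc0, hc1, hc3, hc4, ← hcc2, ← ht, one_smul] at hch
  have E1 : B + (-t) • 1 + c2 • Λ + (-t) • Λ ^ 2 + Λ ^ 3 = 0 := by
    have := congrArg (fun M => B * M) hch
    simpa only [mul_add, Matrix.mul_smul, Matrix.mul_one, Matrix.mul_zero, h2,
      k12, k13, k14] using this
  have E2 : B ^ 2 + (-t) • B + c2 • 1 + (-t) • Λ + Λ ^ 2 = 0 := by
    have := congrArg (fun M => B ^ 2 * M) hch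
    simpa only [mul_add, Matrix.mul_smul, Matrix.mul_one, Matrix.mul_zero,
      k21, k22, k23, k24] using this
  have E3 : B ^ 3 + (-t) • B ^ 2 + c2 • B + (-t) • 1 + Λ = 0 := by
    have := congrArg (fun M => B ^ 3 * M) hch
    simpa only [mul_add, Matrix.mul_smul, Matrix.mul_one, Matrix.mul_zero,
      k31, k32, k33, k34] using this
  -- the trace of E2 determines c2
  have htB2 : Matrix.trace (B ^ 2) = Matrix.trace (Λ * Λ) := by
    rw [pow_two]; exact htr2
  have htΛ2 : Matrix.trace (Λ ^ 2) = Matrix.trace (Λ * Λ) := by rw [pow_two]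
  have hc2val : c2 = (t ^ 2 - Matrix.trace (Λ * Λ)) / 2 := by
    have tE2 := congrArg Matrix.trace E2
    simp only [Matrix.trace_add, Matrix.trace_smul, Matrix.trace_zero, Matrix.trace_one,
      htB2, htΛ2, htr1, smul_eq_mul, Fintype.card_fin] at tE2
    ring_nf at tE2 ⊢
    nlinarith [tE2]
  have G1 : Λ ^ 2 + B ^ 2 = (-c2) • 1 + t • (Λ + B) := by
    linear_combination (norm := module) E2
  rw [← hc2val]
  refine ⟨G1, ?_⟩
  linear_combination (norm := module) E1 + E3 + t • G1
end

section
/- Let g be a 4×4 real symmetric matrix with det g < 0 and let L ∈ so(g) be simple with exp(L) = Λ. If tr₂ L < 0 then tr Λ = 2(1 + cosh√(−tr₂ L)) ≥ 4; if tr₂ L > 0 then tr Λ = 2(1 + cos√(tr₂ L)) ≥ 0; if tr₂ L = 0 then tr Λ = 4. In all cases tr₂ Λ = 2 tr Λ − 2 and tr Λ ≥ 0. -/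
open Matrix

open scoped Nat

-- closed form sums
lemma sumCosh (b : ℝ) (hb : 0 ≤ b) :
    HasSum (fun k : ℕ => 2 * b ^ (k + 1) / ((2 * k + 2)! : ℝ))
      (2 * (Real.cosh (Real.sqrt b) - 1)) := by
  have h := Real.hasSum_cosh (Real.sqrt b)
  have h' : HasSum (fun n : ℕ => b ^ n / ((2 * n)! : ℝ)) (Real.cosh (Real.sqrt b)) := by
    convert h using 2 with n
    rw [pow_mul, Real.sq_sqrt hb]
  have h1 : HasSum (fun k : ℕ => b ^ (k + 1) / ((2 * (k + 1))! : ℝ))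
      (Real.cosh (Real.sqrt b) - 1) := by
    rw [hasSum_nat_add_iff (f := fun n : ℕ => b ^ n / ((2 * n)! : ℝ)) 1]
    simpa using h'
  have := h1.mul_left 2
  convert this using 2 with k
  · rfl
  rw [mul_div_assoc]
  congr 2

lemma sumCos (b : ℝ) (hb : 0 ≤ b) :
    HasSum (fun k : ℕ => 2 * (-b) ^ (k + 1) / ((2 * k + 2)! : ℝ))
      (2 * (Real.cos (Real.sqrt b) - 1)) := by
  have h := Real.hasSum_cos (Real.sqrt b)
  have h' : HasSum (fun n : ℕ => (-b) ^ n / ((2 * n)! : ℝ)) (Real.cos (Real.sqrt b)) := by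
    convert h using 2 with n
    rw [pow_mul, Real.sq_sqrt hb, neg_pow]
  have h1 : HasSum (fun k : ℕ => (-b) ^ (k + 1) / ((2 * (k + 1))! : ℝ))
      (Real.cos (Real.sqrt b) - 1) := by
    rw [hasSum_nat_add_iff (f := fun n : ℕ => (-b) ^ n / ((2 * n)! : ℝ)) 1]
    simpa using h'
  have := h1.mul_left 2
  convert this using 2 with k
  · rfl
  rw [mul_div_assoc]
  congr 2

lemma traceExpAux (M : Matrix (Fin 4) (Fin 4) ℝ) (c : ℝ)
    (htr : Matrix.trace M = 0) (h2 : Matrix.trace (M * M) = -(2 * c))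
    (hM : M ^ 3 = -(c • M)) :
    HasSum (fun k : ℕ => 2 * (-c) ^ (k + 1) / ((2 * k + 2)! : ℝ))
      (Matrix.trace (NormedSpace.exp M) - 4) := by
  letI : SeminormedRing (Matrix (Fin 4) (Fin 4) ℝ) := Matrix.linftyOpSemiNormedRing
  letI : NormedRing (Matrix (Fin 4) (Fin 4) ℝ) := Matrix.linftyOpNormedRing
  letI : NormedAlgebra ℝ (Matrix (Fin 4) (Fin 4) ℝ) := Matrix.linftyOpNormedAlgebra
  have hodd : ∀ k : ℕ, M ^ (2 * k + 1) = (-c) ^ k • M := by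
    intro k
    induction k with
    | zero => simp
    | succ k ih =>
      have hstep : M ^ (2 * (k + 1) + 1) = M ^ (2 * k + 1) * M ^ 2 := by
        rw [← pow_add]
        norm_num
        ring_nf
      have h3 : M * M ^ 2 = M ^ 3 := by rw [← pow_succ']
      rw [hstep, ih, smul_mul_assoc, h3, hM, pow_succ]
      module
  have heven : ∀ k : ℕ, M ^ (2 * k + 2) = (-c) ^ k • (M * M) := by
    intro k
    have h4 : M ^ (2 * k + 2) = M ^ (2 * k + 1) * M := by rw [← pow_succ]
    rw [h4, hodd k, smul_mul_assoc]
  have hsum := NormedSpace.exp_series_hasSum_exp' (𝕂 := ℝ) M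
  have htrace := hsum.mapL ((Matrix.traceLinearMap (Fin 4) ℝ ℝ).toContinuousLinearMap)
  set f : ℕ → ℝ := fun n => ((n ! : ℝ))⁻¹ * Matrix.trace (M ^ n) with hf
  have htrace' : HasSum f (Matrix.trace (NormedSpace.exp M)) := by
    convert htrace using 2 with n
    · rfl
    rw [hf]
    simp [Matrix.trace_smul, smul_eq_mul]
    rfl
  have hf0 : f 0 = 4 := by
    rw [hf]; simp [Matrix.trace_one]
  have h1 : HasSum (fun n : ℕ => f (n + 1)) (Matrix.trace (NormedSpace.exp M) - 4) := by
    rw [hasSum_nat_add_iff (f := f) 1]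
    simpa [hf0] using htrace'
  have hinj : Function.Injective (fun k : ℕ => 2 * k + 1) := by
    intro a b h
    dsimp only at h
    omega
  have hzero : ∀ x : ℕ, x ∉ Set.range (fun k : ℕ => 2 * k + 1) → f (x + 1) = 0 := by
    intro x hx
    rcases Nat.even_or_odd x with he | ho
    · obtain ⟨m, rfl⟩ := he
      have hx2 : m + m + 1 = 2 * m + 1 := by omega
      rw [hf]
      simp only [hx2, hodd m, Matrix.trace_smul, htr, smul_eq_mul, mul_zero]
    · obtain ⟨k, rfl⟩ := ho
      exact absurd ⟨k, rfl⟩ hx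
  have h2' := (Function.Injective.hasSum_iff hinj hzero).mpr h1
  have hfe : ((fun x => f (x + 1)) ∘ fun k : ℕ => 2 * k + 1) =
      fun k : ℕ => 2 * (-c) ^ (k + 1) / ((2 * k + 2)! : ℝ) := by
    funext k
    show f (2 * k + 1 + 1) = _
    rw [hf]
    simp only [show 2 * k + 1 + 1 = 2 * k + 2 from rfl, heven k, Matrix.trace_smul, h2,
      smul_eq_mul]
    rw [pow_succ, div_eq_mul_inv]
    ring
  rw [hfe] at h2'
  exact h2'

lemma traceExpOfNonneg (M : Matrix (Fin 4) (Fin 4) ℝ) (c : ℝ) (hc : 0 ≤ c)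
    (htr : Matrix.trace M = 0) (h2 : Matrix.trace (M * M) = -(2 * c))
    (hM : M ^ 3 = -(c • M)) :
    Matrix.trace (NormedSpace.exp M) = 2 * (1 + Real.cos (Real.sqrt c)) := by
  have h := traceExpAux M c htr h2 hM
  have h' := sumCos c hc
  have := h.unique h'
  linarith

lemma traceExpOfNonpos (M : Matrix (Fin 4) (Fin 4) ℝ) (c : ℝ) (hc : c ≤ 0)
    (htr : Matrix.trace M = 0) (h2 : Matrix.trace (M * M) = -(2 * c))
    (hM : M ^ 3 = -(c • M)) :
    Matrix.trace (NormedSpace.exp M) = 2 * (1 + Real.cosh (Real.sqrt (-c))) := by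
  have h := traceExpAux M c htr h2 hM
  have h' := sumCosh (-c) (by linarith)
  rw [show -c = -(c) from rfl] at h'
  have h'' : HasSum (fun k : ℕ => 2 * (-c) ^ (k + 1) / ((2 * k + 2)! : ℝ))
      (2 * (Real.cosh (Real.sqrt (-c)) - 1)) := h'
  have := h.unique h''
  linarith

theorem trace_of_exp_simple (g L Λ : Matrix (Fin 4) (Fin 4) ℝ)
    (hsymm : gᵀ = g) (hg : g.det < 0) (hL : Lᵀ * g + g * L = 0)
    (hsimple : L ^ 3 + tr2 L • L = 0)
    (hΛ : Λ = NormedSpace.exp L) :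
    (tr2 L < 0 →
      Matrix.trace Λ = 2 * (1 + Real.cosh (Real.sqrt (-(tr2 L)))) ∧ 4 ≤ Matrix.trace Λ) ∧
    (0 < tr2 L →
      Matrix.trace Λ = 2 * (1 + Real.cos (Real.sqrt (tr2 L))) ∧ 0 ≤ Matrix.trace Λ) ∧
    (tr2 L = 0 → Matrix.trace Λ = 4) ∧
    tr2 Λ = 2 * Matrix.trace Λ - 2 ∧ 0 ≤ Matrix.trace Λ := by

  have hdetne : g.det ≠ 0 := ne_of_lt hg
  have hdetu : IsUnit g.det := isUnit_iff_ne_zero.mpr hdetne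
  have hgL : g * L = -(Lᵀ * g) := eq_neg_of_add_eq_zero_right hL
  have htr : Matrix.trace L = 0 := by
    have h5 : Matrix.trace L = - Matrix.trace L := by
      calc Matrix.trace L = Matrix.trace (g⁻¹ * (g * L)) := by
            rw [← mul_assoc, Matrix.nonsing_inv_mul g hdetu, one_mul]
        _ = Matrix.trace (g⁻¹ * (-(Lᵀ * g))) := by rw [hgL]
        _ = - Matrix.trace (g⁻¹ * (Lᵀ * g)) := by rw [mul_neg, Matrix.trace_neg]
        _ = - Matrix.trace ((Lᵀ * g) * g⁻¹) := by rw [Matrix.trace_mul_comm]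
        _ = - Matrix.trace (Lᵀ * (g * g⁻¹)) := by rw [mul_assoc]
        _ = - Matrix.trace Lᵀ := by rw [Matrix.mul_nonsing_inv g hdetu, mul_one]
        _ = - Matrix.trace L := by rw [Matrix.trace_transpose]
    linarith
  set a := tr2 L with ha
  have h2 : Matrix.trace (L * L) = -(2 * a) := by
    have : a = (Matrix.trace L ^ 2 - Matrix.trace (L * L)) / 2 := rfl
    rw [htr] at this
    nlinarith [this]
  have hM : L ^ 3 = -(a • L) := eq_neg_of_add_eq_zero_left hsimple
  set N : Matrix (Fin 4) (Fin 4) ℝ := (2 : ℝ) • L with hN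
  have htrN : Matrix.trace N = 0 := by rw [hN, Matrix.trace_smul, htr, smul_zero]
  have hNN : N * N = (4 : ℝ) • (L * L) := by
    rw [hN, smul_mul_assoc, mul_smul_comm, smul_smul]
    norm_num
  have h2N : Matrix.trace (N * N) = -(2 * (4 * a)) := by
    rw [hNN, Matrix.trace_smul, h2, smul_eq_mul]
    ring
  have hMN : N ^ 3 = -((4 * a) • N) := by
    rw [hN, smul_pow, hM, show ((2 : ℝ)) ^ 3 = 8 by norm_num]
    module
  have hΛ2 : Λ * Λ = NormedSpace.exp N := by
    rw [hΛ, ← Matrix.exp_add_of_commute L L (Commute.refl L), hN, two_smul]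
  have htr2Λ : tr2 Λ = (Matrix.trace Λ ^ 2 - Matrix.trace (Λ * Λ)) / 2 := rfl
  rcases lt_trichotomy a 0 with hneg | hzero | hpos
  · -- a < 0
    have hT : Matrix.trace Λ = 2 * (1 + Real.cosh (Real.sqrt (-a))) := by
      rw [hΛ]; exact traceExpOfNonpos L a hneg.le htr h2 hM
    have hT2 : Matrix.trace (Λ * Λ) = 2 * (1 + Real.cosh (Real.sqrt (-(4 * a)))) := by
      rw [hΛ2]; exact traceExpOfNonpos N (4 * a) (by linarith) htrN h2N hMN
    have hsq : Real.sqrt (-(4 * a)) = 2 * Real.sqrt (-a) := by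
      rw [show (-(4 * a)) = (2 : ℝ) ^ 2 * (-a) by ring, Real.sqrt_mul (by positivity),
        Real.sqrt_sq (by norm_num)]
    have hc2 : Real.cosh (2 * Real.sqrt (-a)) = 2 * Real.cosh (Real.sqrt (-a)) ^ 2 - 1 := by
      have e1 := Real.cosh_two_mul (Real.sqrt (-a))
      have e2 := Real.cosh_sq (Real.sqrt (-a))
      linarith
    have hch := Real.one_le_cosh (Real.sqrt (-a))
    refine ⟨fun _ => ⟨hT, by nlinarith⟩, fun hp => absurd hp (by linarith),
      fun h0 => absurd h0 (by linarith), ?_, by nlinarith⟩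
    rw [htr2Λ, hT, hT2, hsq, hc2]
    ring
  · -- a = 0
    have hT : Matrix.trace Λ = 4 := by
      rw [hΛ, traceExpOfNonneg L a hzero.ge htr h2 hM, hzero, Real.sqrt_zero, Real.cos_zero]
      norm_num
    have hT2 : Matrix.trace (Λ * Λ) = 4 := by
      rw [hΛ2, traceExpOfNonneg N (4 * a) (by linarith) htrN h2N hMN, hzero]
      norm_num
    refine ⟨fun hp => absurd hp (by linarith), fun hp => absurd hp (by linarith),
      fun _ => hT, ?_, by linarith⟩
    rw [htr2Λ, hT, hT2]
    norm_num
  · -- a > 0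
    have hT : Matrix.trace Λ = 2 * (1 + Real.cos (Real.sqrt a)) := by
      rw [hΛ]; exact traceExpOfNonneg L a hpos.le htr h2 hM
    have hT2 : Matrix.trace (Λ * Λ) = 2 * (1 + Real.cos (Real.sqrt (4 * a))) := by
      rw [hΛ2]; exact traceExpOfNonneg N (4 * a) (by linarith) htrN h2N hMN
    have hsq : Real.sqrt (4 * a) = 2 * Real.sqrt a := by
      rw [show (4 * a : ℝ) = (2 : ℝ) ^ 2 * a by ring, Real.sqrt_mul (by positivity),
        Real.sqrt_sq (by norm_num)]
    have hc2 := Real.cos_two_mul (Real.sqrt a)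
    have hcb := Real.neg_one_le_cos (Real.sqrt a)
    refine ⟨fun hp => absurd hp (by linarith), fun _ => ⟨hT, by nlinarith⟩,
      fun h0 => absurd h0 (by linarith), ?_, by nlinarith⟩
    rw [htr2Λ, hT, hT2, hsq, hc2]
    ring
end
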